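/- arXiv:2203.08523 — 3 statements merged into one kernel-verified Lean document; each statement's English description precedes it below -/
import Mathlib

section
/- Suppose (A_N) satisfies sup_N ‖A_N‖_∞ < ∞ and there is a measurable a ∈ L^∞([0,1]×ℝ) with lim_{N→∞} A_N([t,x]_N) = a(t,x) for almost every (t,x). Then for every continuous compactly supported function g on [0,1]×ℝ, lim_{N→∞} N^{−3/2} E[(S^N_1(g))²] = ∫_{[0,1]×ℝ} g(t,x)² a(t,x)² dt dx. -/
open MeasureTheory ProbabilityTheory Filter Topology

noncomputable section

open Classical in
/-- Real-valued indicator of a proposition. -/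
def indi (p : Prop) : ℝ := if p then 1 else 0

/-- The previous value `t (j-1)`, with the convention `t 0 = 0` (zero for the first index). -/
def prev {α : Type*} [Zero α] {n : ℕ} (t : Fin n → α) (j : Fin n) : α :=
  if _h : j.1 = 0 then 0 else t ⟨j.1 - 1, Nat.lt_of_le_of_lt (Nat.sub_le _ _) j.2⟩

/-- `S` is a simple symmetric random walk on `ℤ` under `P`: `S n = ξ 1 + ⋯ + ξ n` for an
i.i.d. family `ξ` of Rademacher (±1, probability 1/2 each) steps. -/
def IsSSRW {Ω : Type*} [MeasurableSpace Ω] (P : Measure Ω) (S : ℕ → Ω → ℤ) : Prop :=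
  ∃ ξ : ℕ → Ω → ℤ,
    iIndepFun ξ P ∧
    (∀ i, Measurable (ξ i)) ∧
    (∀ i, P {a | ξ i a = 1} = 1/2 ∧ P {a | ξ i a = -1} = 1/2) ∧
    (∀ n a, S n a = ∑ i ∈ Finset.Icc 1 n, ξ i a)

/-- `ω` is an i.i.d. field of Rademacher random variables indexed by `ℕ × ℤ` under `P`. -/
def IsRademacher {Ω : Type*} [MeasurableSpace Ω] (P : Measure Ω) (ω : ℕ × ℤ → Ω → ℝ) : Prop :=
  iIndepFun ω P ∧
  (∀ p, Measurable (ω p)) ∧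
  (∀ p, P {a | ω p a = 1} = 1/2 ∧ P {a | ω p a = -1} = 1/2)

/-- The partition function `𝔷_N(A) = E[∏_{n=1}^N (1 + A(n,S_n) ω(n,S_n)) | ω]`,
the conditional expectation being taken with respect to the σ-algebra generated by `ω`. -/
def partitionFn {Ω : Type*} [MeasurableSpace Ω] (P : Measure Ω)
    (S : ℕ → Ω → ℤ) (ω : ℕ × ℤ → Ω → ℝ) (N : ℕ) (A : ℕ × ℤ → ℝ) : Ω → ℝ :=
  P[fun a => ∏ n ∈ Finset.Icc 1 N, (1 + A (n, S n a) * ω (n, S n a) a) |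
    MeasurableSpace.comap (fun a => fun p => ω p a) inferInstance]

/-- The time coordinate `i` of `[t,x]_N`: the unique `i` with `t ∈ ((i-1)/N, i/N]`. -/
def gridTime (N : ℕ) (t : ℝ) : ℕ := ⌈(N : ℝ) * t⌉₊

/-- The space coordinate `z` of `[t,x]_N`: the unique `z` of the same parity as the time
coordinate `i` with `x ∈ ((z-1)/√N, (z+1)/√N]`. -/
def gridSpace (N : ℕ) (t x : ℝ) : ℤ :=
  (gridTime N t : ℤ) + 2 * ⌈(Real.sqrt N * x - 1 - ((gridTime N t : ℤ) : ℝ)) / 2⌉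

/-- The standard Gaussian heat kernel `ϱ(t,x) = e^{-x²/(2t)} / √(2πt)`. -/
def heatK (t x : ℝ) : ℝ := Real.exp (-(x ^ 2) / (2 * t)) / Real.sqrt (2 * Real.pi * t)

/-- `ϱ_n(t,x) = ∏_j ϱ(t_j - t_{j-1}, x_j - x_{j-1})` on the simplex `Δ_n × ℝ^n`,
zero outside. -/
def rhoN (n : ℕ) (q : (Fin n → ℝ) × (Fin n → ℝ)) : ℝ :=
  indi ((∀ j, 0 < q.1 j ∧ q.1 j ≤ 1) ∧ StrictMono q.1) *
    ∏ j, heatK (q.1 j - prev q.1 j) (q.2 j - prev q.2 j)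

/-- The average of `g` over the rectangle `((i-1)/N, i/N] × ((z-1)/√N, (z+1)/√N]`
(coordinatewise), whose Lebesgue measure is `2^n N^{-3n/2}`; this is the value
`ḡ_N(i/N, z/√N)`. -/
def rectAvg (n : ℕ) (g : (Fin n → ℝ) × (Fin n → ℝ) → ℝ) (N : ℕ)
    (i : Fin n → ℕ) (z : Fin n → ℤ) : ℝ :=
  ((N : ℝ) ^ ((3 * (n : ℝ)) / 2) / 2 ^ n) *
    ∫ q in (Set.univ.pi fun j => Set.Ioc (((i j : ℝ) - 1) / N) ((i j : ℝ) / N)) ×ˢ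
        (Set.univ.pi fun j =>
          Set.Ioc (((z j : ℝ) - 1) / Real.sqrt N) (((z j : ℝ) + 1) / Real.sqrt N)),
      g q

/-- The weighted U-statistic
`S^N_n(g) = 2^{n/2} ∑_{i ∈ E^N_n} ∑_{z ∈ ℤ^n, i ↔ z} ḡ_N(i/N, z/√N) A(i,z) ω(i,z)`. -/
def Ustat {Ω : Type*} (ω : ℕ × ℤ → Ω → ℝ) (A : ℕ × ℤ → ℝ) (n N : ℕ)
    (g : (Fin n → ℝ) × (Fin n → ℝ) → ℝ) (a : Ω) : ℝ :=
  2 ^ ((n : ℝ) / 2) *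
    ∑' i : Fin n → ℕ, ∑' z : Fin n → ℤ,
      indi ((∀ j, 1 ≤ i j ∧ i j ≤ N) ∧ Function.Injective i ∧
            ∀ j, (i j : ℤ) % 2 = z j % 2) *
        (rectAvg n g N i z * (∏ j, A (i j, z j)) * ∏ j, ω (i j, z j) a)

/-- Order-1 rectangle average: the value `ḡ_N(i/N, z/√N)`. -/
def rectAvg1 (g : ℝ × ℝ → ℝ) (N : ℕ) (i : ℕ) (z : ℤ) : ℝ :=
  ((N : ℝ) ^ ((3 : ℝ) / 2) / 2) *
    ∫ q in Set.Ioc (((i : ℝ) - 1) / N) ((i : ℝ) / N) ×ˢ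
        Set.Ioc (((z : ℝ) - 1) / Real.sqrt N) (((z : ℝ) + 1) / Real.sqrt N),
      g q

/-- The order-1 U-statistic `S^N_1(g) = √2 ∑_{i=1}^N ∑_{z ≡ i (2)} ḡ_N(i/N,z/√N) A(i,z) ω(i,z)`. -/
def Ustat1 {Ω : Type*} (ω : ℕ × ℤ → Ω → ℝ) (A : ℕ × ℤ → ℝ) (N : ℕ)
    (g : ℝ × ℝ → ℝ) (a : Ω) : ℝ :=
  Real.sqrt 2 * ∑ i ∈ Finset.Icc 1 N, ∑' z : ℤ,
    indi ((i : ℤ) % 2 = z % 2) * (rectAvg1 g N i z * A (i, z) * ω (i, z) a)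

/-- `p^N_n(t,x) = 2^{-n} p_n([t,x]_N) 1{⌈Nt⌉ ∈ D^N_n}`, built from the one-step
transition probabilities `p` of the walk. -/
def pNn (p : ℕ → ℤ → ℝ) (n N : ℕ) (q : (Fin n → ℝ) × (Fin n → ℝ)) : ℝ :=
  (2 : ℝ)⁻¹ ^ n *
    indi ((∀ j, 1 ≤ gridTime N (q.1 j) ∧ gridTime N (q.1 j) ≤ N) ∧
          StrictMono fun j => gridTime N (q.1 j)) *
    ∏ j, p (gridTime N (q.1 j) - prev (fun j' => gridTime N (q.1 j')) j)
        (gridSpace N (q.1 j) (q.2 j) - prev (fun j' => gridSpace N (q.1 j') (q.2 j')) j)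

end

namespace Stmt5
open MeasureTheory ProbabilityTheory Filter Topology

/-! ### Rademacher lemmas -/

variable {Ω : Type*} [MeasurableSpace Ω] {P : Measure Ω} [IsProbabilityMeasure P]
  {ω : ℕ × ℤ → Ω → ℝ}

lemma rad_ae (hω : IsRademacher P ω) (p : ℕ × ℤ) :
    ∀ᵐ a ∂P, ω p a = 1 ∨ ω p a = -1 := by
  obtain ⟨hi, hm, hd⟩ := hω
  have hs : MeasurableSet {a | ω p a = 1} := (hm p) (measurableSet_singleton 1)
  have ht : MeasurableSet {a | ω p a = -1} := (hm p) (measurableSet_singleton (-1))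
  have hst : Disjoint {a | ω p a = 1} {a | ω p a = -1} := by
    rw [Set.disjoint_left]; rintro a h1 h2
    simp only [Set.mem_setOf_eq] at h1 h2; norm_num [h1] at h2
  have hu : P ({a | ω p a = 1} ∪ {a | ω p a = -1}) = 1 := by
    rw [measure_union hst ht, (hd p).1, (hd p).2]
    norm_num
    exact ENNReal.inv_two_add_inv_two
  have hc : P ({a | ω p a = 1} ∪ {a | ω p a = -1})ᶜ = 0 := by
    rw [measure_compl (hs.union ht) (measure_ne_top _ _), hu, measure_univ]; simp
  have hset : {a | ¬(ω p a = 1 ∨ ω p a = -1)} = ({a | ω p a = 1} ∪ {a | ω p a = -1})ᶜ := by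
    ext a; simp [not_or]
  rw [MeasureTheory.ae_iff, hset]
  exact hc

lemma rad_mul_integrable (hω : IsRademacher P ω) (p q : ℕ × ℤ) :
    Integrable (fun a => ω p a * ω q a) P := by
  refine Integrable.mono' (integrable_const 1) ((hω.2.1 p).mul (hω.2.1 q)).aestronglyMeasurable ?_
  filter_upwards [rad_ae hω p, rad_ae hω q] with a hp hq
  rcases hp with h1 | h1 <;> rcases hq with h2 | h2 <;> simp [h1, h2]

lemma rad_integral_zero (hω : IsRademacher P ω) (p : ℕ × ℤ) : ∫ a, ω p a ∂P = 0 := by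
  obtain ⟨hi, hm, hd⟩ := hω
  have hs : MeasurableSet {a | ω p a = 1} := (hm p) (measurableSet_singleton 1)
  have ht : MeasurableSet {a | ω p a = -1} := (hm p) (measurableSet_singleton (-1))
  have heq : ω p =ᵐ[P] fun a =>
      Set.indicator {a | ω p a = 1} (fun _ => (1:ℝ)) a
        - Set.indicator {a | ω p a = -1} (fun _ => (1:ℝ)) a := by
    filter_upwards [rad_ae ⟨hi, hm, hd⟩ p] with a ha
    rcases ha with h1 | h1
    · have h2 : a ∉ {a | ω p a = -1} := by norm_num [Set.mem_setOf_eq, h1]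
      rw [Set.indicator_of_mem (by exact h1), Set.indicator_of_notMem h2]
      simp [h1]
    · have h2 : a ∉ {a | ω p a = 1} := by norm_num [Set.mem_setOf_eq, h1]
      rw [Set.indicator_of_notMem h2, Set.indicator_of_mem (by exact h1)]
      simp [h1]
  rw [integral_congr_ae heq, integral_sub ((integrable_const 1).indicator hs)
    ((integrable_const 1).indicator ht), integral_indicator_const _ hs,
    integral_indicator_const _ ht, measureReal_def, measureReal_def, (hd p).1, (hd p).2]
  simp

lemma rad_integral_mul (hω : IsRademacher P ω) {p q : ℕ × ℤ} (hpq : p ≠ q) :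
    ∫ a, ω p a * ω q a ∂P = 0 := by
  have h : ∫ a, (ω p * ω q) a ∂P = (∫ a, ω p a ∂P) * ∫ a, ω q a ∂P :=
    (hω.1.indepFun hpq).integral_mul_eq_mul_integral (hω.2.1 p).aestronglyMeasurable
      (hω.2.1 q).aestronglyMeasurable
  simpa [rad_integral_zero hω p] using h

lemma rad_integral_sq (hω : IsRademacher P ω) (p : ℕ × ℤ) :
    ∫ a, ω p a * ω p a ∂P = 1 := by
  have heq : (fun a => ω p a * ω p a) =ᵐ[P] fun _ => (1:ℝ) := by
    filter_upwards [rad_ae hω p] with a ha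
    rcases ha with h1 | h1 <;> simp [h1]
  rw [integral_congr_ae heq]; simp

lemma integral_sq_sum (hω : IsRademacher P ω) (T : Finset (ℕ × ℤ)) (c : ℕ × ℤ → ℝ) :
    ∫ a, (∑ p ∈ T, c p * ω p a)^2 ∂P = ∑ p ∈ T, (c p)^2 := by
  have h1 : ∀ a : Ω, (∑ p ∈ T, c p * ω p a)^2
      = ∑ p ∈ T, ∑ q ∈ T, (c p * c q) * (ω p a * ω q a) := by
    intro a; rw [sq, Finset.sum_mul_sum]
    exact Finset.sum_congr rfl fun p _ => Finset.sum_congr rfl fun q _ => by ring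
  simp only [h1]
  rw [integral_finset_sum _ (fun p hp => integrable_finset_sum _
    (fun q hq => ((rad_mul_integrable hω p q).const_mul _)))]
  refine Finset.sum_congr rfl fun p hp => ?_
  rw [integral_finset_sum _ (fun q hq => (rad_mul_integrable hω p q).const_mul _)]
  have h2 : ∀ q ∈ T, ∫ a, (c p * c q) * (ω p a * ω q a) ∂P
      = if q = p then (c p)^2 else 0 := by
    intro q hq
    rw [MeasureTheory.integral_const_mul]
    by_cases h : q = p
    · subst h; rw [rad_integral_sq hω]; simp [sq]
    · rw [rad_integral_mul hω (fun hh => h hh.symm)]; simp [h]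
  rw [Finset.sum_congr rfl h2, Finset.sum_ite_eq' T p (fun _ => (c p)^2), if_pos hp]

/-! ### Grid and rectangle lemmas -/

def rect (N : ℕ) (i : ℕ) (z : ℤ) : Set (ℝ × ℝ) :=
  Set.Ioc (((i : ℝ) - 1) / N) ((i : ℝ) / N) ×ˢ
    Set.Ioc (((z : ℝ) - 1) / Real.sqrt N) (((z : ℝ) + 1) / Real.sqrt N)

lemma rect_measurable (N : ℕ) (i : ℕ) (z : ℤ) : MeasurableSet (rect N i z) :=
  measurableSet_Ioc.prod measurableSet_Ioc

lemma gridTime_pos {N : ℕ} (hN : 1 ≤ N) {t : ℝ} (ht : 0 < t) : 1 ≤ gridTime N t := by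
  have : (0:ℝ) < (N:ℝ) * t := by
    have : (0:ℝ) < N := by exact_mod_cast hN
    positivity
  exact Nat.ceil_pos.mpr this

lemma gridTime_le {N : ℕ} {t : ℝ} (ht : t ≤ 1) : gridTime N t ≤ N := by
  apply Nat.ceil_le.mpr
  nlinarith [Nat.cast_nonneg (α := ℝ) N]

lemma gridTime_mem {N : ℕ} (hN : 1 ≤ N) {t : ℝ} (ht : 0 < t) :
    t ∈ Set.Ioc (((gridTime N t : ℝ) - 1) / N) ((gridTime N t : ℝ) / N) := by
  have hN0 : (0:ℝ) < N := by exact_mod_cast hN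
  have h1 : (N:ℝ) * t ≤ (gridTime N t : ℝ) := Nat.le_ceil _
  have h2 : (gridTime N t : ℝ) < (N:ℝ) * t + 1 := Nat.ceil_lt_add_one (by positivity)
  constructor
  · rw [div_lt_iff₀ hN0]; linarith [mul_comm (N:ℝ) t]
  · rw [le_div_iff₀ hN0]; linarith [mul_comm (N:ℝ) t]

lemma gridTime_eq {N i : ℕ} (hN : 1 ≤ N) (hi : 1 ≤ i) {t : ℝ}
    (h : t ∈ Set.Ioc (((i:ℝ) - 1) / N) ((i:ℝ) / N)) : gridTime N t = i := by
  have hN0 : (0:ℝ) < N := by exact_mod_cast hN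
  rw [gridTime, Nat.ceil_eq_iff (by omega)]
  constructor
  · rw [Nat.cast_sub hi, Nat.cast_one]
    have := h.1
    rw [div_lt_iff₀ hN0] at this
    linarith [mul_comm t (N:ℝ)]
  · have := h.2
    rw [le_div_iff₀ hN0] at this
    linarith [mul_comm t (N:ℝ)]

lemma gridSpace_parity (N : ℕ) (t x : ℝ) :
    (gridTime N t : ℤ) % 2 = gridSpace N t x % 2 := by
  rw [gridSpace]; omega

lemma gridSpace_mem {N : ℕ} (hN : 1 ≤ N) (t x : ℝ) :
    x ∈ Set.Ioc (((gridSpace N t x : ℝ) - 1) / Real.sqrt N)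
      (((gridSpace N t x : ℝ) + 1) / Real.sqrt N) := by
  have hs : (0:ℝ) < Real.sqrt N := Real.sqrt_pos.mpr (by exact_mod_cast hN)
  set i : ℤ := (gridTime N t : ℤ) with hi
  set k : ℤ := ⌈(Real.sqrt N * x - 1 - (i:ℝ)) / 2⌉ with hk
  have h1 : (Real.sqrt N * x - 1 - (i:ℝ)) / 2 ≤ (k:ℝ) := Int.le_ceil _
  have h2 : (k:ℝ) < (Real.sqrt N * x - 1 - (i:ℝ)) / 2 + 1 := Int.ceil_lt_add_one _
  have hzz : gridSpace N t x = i + 2 * k := rfl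
  have hz : ((gridSpace N t x : ℝ)) = (i:ℝ) + 2 * (k:ℝ) := by
    rw [hzz]; push_cast; ring
  rw [hz]
  constructor
  · rw [div_lt_iff₀ hs]; nlinarith [mul_comm x (Real.sqrt N)]
  · rw [le_div_iff₀ hs]; nlinarith [mul_comm x (Real.sqrt N)]

lemma gridSpace_eq {N : ℕ} (hN : 1 ≤ N) {t x : ℝ} {z : ℤ}
    (hpar : (gridTime N t : ℤ) % 2 = z % 2)
    (hx : x ∈ Set.Ioc (((z:ℝ) - 1) / Real.sqrt N) (((z:ℝ) + 1) / Real.sqrt N)) :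
    gridSpace N t x = z := by
  have hs : (0:ℝ) < Real.sqrt N := Real.sqrt_pos.mpr (by exact_mod_cast hN)
  obtain ⟨k, hkz⟩ : ∃ k : ℤ, z = (gridTime N t : ℤ) + 2 * k := ⟨(z - gridTime N t) / 2, by omega⟩
  have h1 : (z:ℝ) - 1 < Real.sqrt N * x := by
    have := hx.1; rw [div_lt_iff₀ hs] at this; nlinarith [mul_comm x (Real.sqrt N)]
  have h2 : Real.sqrt N * x ≤ (z:ℝ) + 1 := by
    have := hx.2; rw [le_div_iff₀ hs] at this; nlinarith [mul_comm x (Real.sqrt N)]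
  have hzr : (z:ℝ) = ((gridTime N t : ℤ) : ℝ) + 2 * (k:ℝ) := by rw [hkz]; push_cast; ring
  have hceil : ⌈(Real.sqrt N * x - 1 - ((gridTime N t : ℤ):ℝ)) / 2⌉ = k := by
    rw [Int.ceil_eq_iff]
    rw [hzr] at h1 h2
    push_cast at h1 h2 ⊢
    constructor
    · rw [lt_div_iff₀ (by norm_num : (0:ℝ) < 2)]
      linarith
    · rw [div_le_iff₀ (by norm_num : (0:ℝ) < 2)]
      linarith
  rw [gridSpace, hceil, hkz]

lemma vol_rect_toReal {a b c d : ℝ} (hab : a ≤ b) (hcd : c ≤ d) :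
    (volume (Set.Ioc a b ×ˢ Set.Ioc c d)).toReal = (b - a) * (d - c) := by
  rw [MeasureTheory.Measure.volume_eq_prod, Measure.prod_prod, Real.volume_Ioc, Real.volume_Ioc,
    ENNReal.toReal_mul, ENNReal.toReal_ofReal (by linarith), ENNReal.toReal_ofReal (by linarith)]

lemma vol_rect_lt_top {a b c d : ℝ} : volume (Set.Ioc a b ×ˢ Set.Ioc c d) < ⊤ := by
  rw [MeasureTheory.Measure.volume_eq_prod, Measure.prod_prod, Real.volume_Ioc, Real.volume_Ioc]
  exact ENNReal.mul_lt_top ENNReal.ofReal_lt_top ENNReal.ofReal_lt_top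

lemma rect_toReal {N : ℕ} (hN : 1 ≤ N) (i : ℕ) (z : ℤ) :
    (volume (rect N i z)).toReal = (1 / N) * (2 / Real.sqrt N) := by
  have hN0 : (0:ℝ) < N := by exact_mod_cast hN
  have hs : (0:ℝ) < Real.sqrt N := Real.sqrt_pos.mpr hN0
  rw [rect, vol_rect_toReal ((div_le_div_iff_of_pos_right hN0).mpr (by linarith))
      ((div_le_div_iff_of_pos_right hs).mpr (by linarith))]
  rw [div_sub_div_same, div_sub_div_same]
  ring_nf

lemma prefactor {N : ℕ} (hN : 1 ≤ N) : (N:ℝ) ^ ((3:ℝ)/2) = (N:ℝ) * Real.sqrt N := by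
  have hN0 : (0:ℝ) < N := by exact_mod_cast hN
  rw [show (3:ℝ)/2 = 1 + 1/2 by norm_num, Real.rpow_add hN0, Real.rpow_one,
    Real.sqrt_eq_rpow]

lemma neg_exp {N : ℕ} (hN : 1 ≤ N) :
    (N:ℝ) ^ (-(3/2 : ℝ)) = 1 / ((N:ℝ) * Real.sqrt N) := by
  rw [Real.rpow_neg (by positivity), show (3/2 : ℝ) = (3:ℝ)/2 by norm_num, prefactor hN, one_div]

lemma prefactor_mul_vol {N : ℕ} (hN : 1 ≤ N) :
    ((N:ℝ) ^ ((3:ℝ)/2) / 2) * ((1 / N) * (2 / Real.sqrt N)) = 1 := by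
  have hN0 : (0:ℝ) < N := by exact_mod_cast hN
  have hs : (0:ℝ) < Real.sqrt N := Real.sqrt_pos.mpr hN0
  rw [prefactor hN]
  field_simp

lemma integrableOn_bdd {f : ℝ × ℝ → ℝ} (hf : Measurable f) {C : ℝ} (hC : ∀ y, |f y| ≤ C)
    {s : Set (ℝ × ℝ)} (hs : volume s < ⊤) : IntegrableOn f s volume :=
  Integrable.mono' (integrableOn_const (ne_of_lt hs)) hf.aestronglyMeasurable.restrict
    (ae_of_all _ fun y => by simpa [Real.norm_eq_abs] using hC y)

lemma rectAvg1_zero_N (g : ℝ × ℝ → ℝ) (i : ℕ) (z : ℤ) : rectAvg1 g 0 i z = 0 := by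
  rw [rectAvg1]
  norm_num [Real.zero_rpow (by norm_num : ((3:ℝ)/2) ≠ 0)]

lemma abs_rectAvg1_le {g : ℝ × ℝ → ℝ} (hg : Measurable g) {Mg : ℝ} (hMg : 0 ≤ Mg)
    (hb : ∀ y, |g y| ≤ Mg) (N i : ℕ) (z : ℤ) : |rectAvg1 g N i z| ≤ Mg := by
  rcases Nat.eq_zero_or_pos N with h0 | hN
  · subst h0; simpa [rectAvg1_zero_N] using hMg
  have hN0 : (0:ℝ) < N := by exact_mod_cast hN
  have hs : (0:ℝ) < Real.sqrt N := Real.sqrt_pos.mpr hN0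
  have hint : ‖∫ q in rect N i z, g q‖ ≤ Mg * (volume (rect N i z)).toReal := by
    apply norm_setIntegral_le_of_norm_le_const vol_rect_lt_top
      (fun y _ => by simpa [Real.norm_eq_abs] using hb y)
  rw [rectAvg1, abs_mul, abs_of_nonneg (by positivity : (0:ℝ) ≤ (N:ℝ) ^ ((3:ℝ)/2) / 2)]
  calc (N:ℝ) ^ ((3:ℝ)/2) / 2 * |∫ q in rect N i z, g q|
      ≤ (N:ℝ) ^ ((3:ℝ)/2) / 2 * (Mg * (volume (rect N i z)).toReal) := by
        apply mul_le_mul_of_nonneg_left _ (by positivity)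
        simpa [Real.norm_eq_abs] using hint
    _ = Mg := by
        rw [rect_toReal hN]
        have := prefactor_mul_vol (N := N) hN
        nlinarith [this]

lemma rectAvg1_eq_zero {g : ℝ × ℝ → ℝ} {N i : ℕ} {z : ℤ}
    (h : ∀ y ∈ rect N i z, g y = 0) : rectAvg1 g N i z = 0 := by
  rw [rectAvg1]
  rw [show (∫ q in Set.Ioc (((i : ℝ) - 1) / N) ((i : ℝ) / N) ×ˢ
        Set.Ioc (((z : ℝ) - 1) / Real.sqrt N) (((z : ℝ) + 1) / Real.sqrt N), g q)
      = ∫ q in rect N i z, (0:ℝ) from setIntegral_congr_fun (rect_measurable N i z) h]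
  simp

lemma rectAvg1_sub_eq {g : ℝ × ℝ → ℝ} (hg : Measurable g) {Mg : ℝ} (hb : ∀ y, |g y| ≤ Mg)
    {N : ℕ} (hN : 1 ≤ N) (i : ℕ) (z : ℤ) (v : ℝ) :
    rectAvg1 g N i z - v = ((N:ℝ) ^ ((3:ℝ)/2) / 2) * ∫ y in rect N i z, (g y - v) := by
  have hint : IntegrableOn g (rect N i z) volume := integrableOn_bdd hg hb vol_rect_lt_top
  rw [integral_sub hint (integrableOn_const (ne_of_lt vol_rect_lt_top))]
  rw [setIntegral_const, measureReal_def, rect_toReal hN, smul_eq_mul]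
  have h1 := prefactor_mul_vol hN
  have h2 : rectAvg1 g N i z = ((N:ℝ) ^ ((3:ℝ)/2) / 2) * ∫ y in rect N i z, g y := rfl
  rw [h2]
  linear_combination v * h1

lemma rectAvg1_tendsto {g : ℝ × ℝ → ℝ} (hg : Continuous g) {Mg : ℝ} (hb : ∀ y, |g y| ≤ Mg)
    (t x : ℝ) (ht : 0 < t) :
    Tendsto (fun N : ℕ => rectAvg1 g N (gridTime N t) (gridSpace N t x)) atTop
      (𝓝 (g (t, x))) := by
  rw [Metric.tendsto_atTop]
  intro ε hε
  obtain ⟨δ, hδ, hδg⟩ := Metric.continuous_iff.mp hg (t, x) (ε/2) (half_pos hε)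
  have h1 : ∀ᶠ N : ℕ in atTop, (1:ℝ)/N < δ :=
    tendsto_one_div_atTop_nhds_zero_nat.eventually_lt_const hδ
  have h2 : ∀ᶠ N : ℕ in atTop, 2/Real.sqrt N < δ := by
    rw [eventually_atTop]
    refine ⟨⌈(2/δ)^2⌉₊ + 1, fun N hNge => ?_⟩
    have hgt : (2/δ)^2 < (N:ℝ) := by
      calc (2/δ)^2 ≤ (⌈(2/δ)^2⌉₊ : ℝ) := Nat.le_ceil _
        _ < (N:ℝ) := by exact_mod_cast Nat.lt_of_lt_of_le (Nat.lt_succ_self _) hNge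
    have hsq : 2/δ < Real.sqrt N := by
      have h0 : (0:ℝ) ≤ 2/δ := by positivity
      nlinarith [Real.sq_sqrt (le_trans (by positivity) hgt.le), Real.sqrt_nonneg (N:ℝ),
        Real.sqrt_lt_sqrt (by positivity) hgt]
    have hspos : (0:ℝ) < Real.sqrt N := lt_of_le_of_lt (by positivity) hsq
    rw [div_lt_iff₀ hspos]
    rw [div_lt_iff₀ hδ] at hsq
    nlinarith
  have h3 : ∀ᶠ N : ℕ in atTop, 1 ≤ N := eventually_ge_atTop 1
  have key : ∀ᶠ N : ℕ in atTop,
      dist (rectAvg1 g N (gridTime N t) (gridSpace N t x)) (g (t, x)) < ε := by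
    filter_upwards [h1, h2, h3] with N hN1 hN2 hN3
    set i := gridTime N t
    set z := gridSpace N t x
    have hN0 : (0:ℝ) < N := by exact_mod_cast hN3
    have hs : (0:ℝ) < Real.sqrt N := Real.sqrt_pos.mpr hN0
    have htm := gridTime_mem hN3 ht
    have hxm := gridSpace_mem hN3 t x
    have hbd : ∀ y ∈ rect N i z, ‖g y - g (t, x)‖ ≤ ε/2 := by
      rintro ⟨y1, y2⟩ hy
      have hy1 := (Set.mem_prod.mp hy).1
      have hy2 := (Set.mem_prod.mp hy).2
      have hd1 : dist y1 t < δ := by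
        rw [Real.dist_eq, abs_lt]
        have l1 := hy1.1; have l2 := hy1.2; have l3 := htm.1; have l4 := htm.2
        have hlen : (i:ℝ)/N - ((i:ℝ) - 1)/N = 1/N := by field_simp; ring
        constructor <;> nlinarith
      have hd2 : dist y2 x < δ := by
        rw [Real.dist_eq, abs_lt]
        have l1 := hy2.1; have l2 := hy2.2; have l3 := hxm.1; have l4 := hxm.2
        have hlen : ((z:ℝ) + 1)/Real.sqrt N - ((z:ℝ) - 1)/Real.sqrt N = 2/Real.sqrt N := by
          field_simp; ring
        constructor <;> nlinarith
      have hdist : dist ((y1, y2) : ℝ × ℝ) (t, x) < δ := by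
        rw [Prod.dist_eq]
        exact max_lt hd1 hd2
      have := hδg _ hdist
      rw [Real.dist_eq] at this
      exact le_of_lt (by simpa [Real.norm_eq_abs] using this)
    have hnorm : ‖∫ y in rect N i z, (g y - g (t, x))‖
        ≤ (ε/2) * (volume (rect N i z)).toReal :=
      norm_setIntegral_le_of_norm_le_const vol_rect_lt_top hbd
    rw [Real.dist_eq, rectAvg1_sub_eq hg.measurable hb hN3, abs_mul,
      abs_of_nonneg (by positivity : (0:ℝ) ≤ (N:ℝ) ^ ((3:ℝ)/2) / 2)]
    calc (N:ℝ) ^ ((3:ℝ)/2) / 2 * |∫ y in rect N i z, (g y - g (t, x))|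
        ≤ (N:ℝ) ^ ((3:ℝ)/2) / 2 * ((ε/2) * (volume (rect N i z)).toReal) := by
          apply mul_le_mul_of_nonneg_left _ (by positivity)
          simpa [Real.norm_eq_abs] using hnorm
      _ = ε/2 * ((N:ℝ) ^ ((3:ℝ)/2) / 2 * ((1 / N) * (2 / Real.sqrt N))) := by
          rw [rect_toReal hN3]; ring
      _ = ε/2 := by rw [prefactor_mul_vol hN3, mul_one]
      _ < ε := half_lt_self hε
  exact eventually_atTop.mp key

end Stmt5
namespace Stmt5
open MeasureTheory ProbabilityTheory Filter Topology

/-! ### Support / vanishing lemmas -/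

lemma rectAvg1_vanish {g : ℝ × ℝ → ℝ} {R : ℝ} (hgR : ∀ y : ℝ × ℝ, R < |y.2| → g y = 0)
    {N : ℕ} (hN : 1 ≤ N) {z : ℤ} (hz : R * Real.sqrt N + 1 < |(z:ℝ)|) (i : ℕ) :
    rectAvg1 g N i z = 0 := by
  have hs : (0:ℝ) < Real.sqrt N := Real.sqrt_pos.mpr (by exact_mod_cast hN)
  apply rectAvg1_eq_zero
  rintro ⟨y1, y2⟩ hy
  have hy2 := (Set.mem_prod.mp hy).2
  apply hgR
  show R < |y2|
  rcases lt_abs.mp hz with h | h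
  · have h1 : R < ((z:ℝ) - 1) / Real.sqrt N := by rw [lt_div_iff₀ hs]; nlinarith
    have h2 : R < y2 := lt_trans h1 hy2.1
    exact lt_of_lt_of_le h2 (le_abs_self _)
  · have h1 : ((z:ℝ) + 1) / Real.sqrt N < -R := by rw [div_lt_iff₀ hs]; nlinarith
    have h2 : y2 < -R := lt_of_le_of_lt hy2.2 h1
    calc R < -y2 := by linarith
      _ ≤ |y2| := neg_le_abs _

noncomputable def zSet (R : ℝ) (N : ℕ) : Finset ℤ :=
  Finset.Icc (-(⌈R * Real.sqrt N⌉ + 2)) (⌈R * Real.sqrt N⌉ + 2)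

lemma not_mem_zSet {R : ℝ} {N : ℕ} {z : ℤ} (hz : z ∉ zSet R N) :
    R * Real.sqrt N + 1 < |(z:ℝ)| := by
  have hc : R * Real.sqrt N ≤ (⌈R * Real.sqrt N⌉ : ℝ) := Int.le_ceil _
  rw [zSet, Finset.mem_Icc, not_and_or, not_le, not_le] at hz
  rcases hz with h | h
  · have h1 : (z:ℝ) < -(⌈R * Real.sqrt N⌉ : ℝ) - 2 := by
      have : ((z:ℤ):ℝ) < ((-(⌈R * Real.sqrt N⌉ + 2) : ℤ) : ℝ) := by exact_mod_cast h
      push_cast at this; linarith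
    have h2 : R * Real.sqrt N + 1 < -(z:ℝ) := by linarith
    exact lt_of_lt_of_le h2 (neg_le_abs _)
  · have h1 : (⌈R * Real.sqrt N⌉ : ℝ) + 2 < (z:ℝ) := by
      have : (((⌈R * Real.sqrt N⌉ + 2) : ℤ) : ℝ) < ((z:ℤ):ℝ) := by exact_mod_cast h
      push_cast at this; linarith
    have h2 : R * Real.sqrt N + 1 < (z:ℝ) := by linarith
    exact lt_of_lt_of_le h2 (le_abs_self _)

lemma gridSpace_large {R : ℝ} (hR : 0 ≤ R) {N : ℕ} (hN : 1 ≤ N) {x : ℝ}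
    (hx : R + 2 < |x|) (t : ℝ) :
    R * Real.sqrt N + 1 < |((gridSpace N t x : ℤ) : ℝ)| := by
  have hN0 : (0:ℝ) < N := by exact_mod_cast hN
  have hs : (0:ℝ) < Real.sqrt N := Real.sqrt_pos.mpr hN0
  have hs1 : (1:ℝ) ≤ Real.sqrt N := by
    rw [show (1:ℝ) = Real.sqrt 1 by simp]
    exact Real.sqrt_le_sqrt (by exact_mod_cast hN)
  have hm := gridSpace_mem hN t x
  set z := gridSpace N t x
  have hm1 := hm.1; have hm2 := hm.2
  rw [div_lt_iff₀ hs] at hm1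
  rw [le_div_iff₀ hs] at hm2
  rcases lt_abs.mp hx with h | h
  · -- R + 2 < x : z is large positive
    have hzl : Real.sqrt N * x - 1 ≤ (z:ℝ) := by nlinarith
    have : R * Real.sqrt N + 1 < (z:ℝ) := by nlinarith
    exact lt_of_lt_of_le this (le_abs_self _)
  · -- R + 2 < -x : z is large negative
    have hzu : (z:ℝ) ≤ Real.sqrt N * x + 1 + 1 := by nlinarith
    have : R * Real.sqrt N + 1 < -(z:ℝ) := by nlinarith
    exact lt_of_lt_of_le this (neg_le_abs _)

/-! ### Part II : the second moment identity -/

lemma partII {Ω : Type*} [MeasurableSpace Ω] {P : Measure Ω} [IsProbabilityMeasure P]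
    {ω : ℕ × ℤ → Ω → ℝ} (hω : IsRademacher P ω)
    {g : ℝ × ℝ → ℝ} {R : ℝ} (hgR : ∀ y : ℝ × ℝ, R < |y.2| → g y = 0)
    (A : ℕ × ℤ → ℝ) {N : ℕ} (hN : 1 ≤ N) :
    ∫ a, (Ustat1 ω A N g a)^2 ∂P
      = 2 * ∑ p ∈ Finset.Icc 1 N ×ˢ zSet R N,
          (indi ((p.1:ℤ) % 2 = p.2 % 2) * (rectAvg1 g N p.1 p.2 * A p))^2 := by
  set c : ℕ × ℤ → ℝ :=
    fun p => indi ((p.1:ℤ) % 2 = p.2 % 2) * (rectAvg1 g N p.1 p.2 * A p) with hc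
  have hfun : ∀ a, Ustat1 ω A N g a
      = Real.sqrt 2 * ∑ p ∈ Finset.Icc 1 N ×ˢ zSet R N, c p * ω p a := by
    intro a
    rw [Ustat1, Finset.sum_product]
    congr 1
    refine Finset.sum_congr rfl fun i hi => ?_
    rw [tsum_eq_sum (s := zSet R N) (fun z hz => by
      rw [rectAvg1_vanish hgR hN (not_mem_zSet hz) i]; ring)]
    exact Finset.sum_congr rfl fun z hz => by rw [hc]; ring
  have h2 : ∀ a, (Ustat1 ω A N g a)^2
      = 2 * (∑ p ∈ Finset.Icc 1 N ×ˢ zSet R N, c p * ω p a)^2 := by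
    intro a; rw [hfun a, mul_pow, Real.sq_sqrt (by norm_num : (0:ℝ) ≤ 2)]
  calc ∫ a, (Ustat1 ω A N g a)^2 ∂P
      = ∫ a, 2 * (∑ p ∈ Finset.Icc 1 N ×ˢ zSet R N, c p * ω p a)^2 ∂P :=
        integral_congr_ae (Filter.Eventually.of_forall h2)
    _ = 2 * ∫ a, (∑ p ∈ Finset.Icc 1 N ×ˢ zSet R N, c p * ω p a)^2 ∂P :=
        MeasureTheory.integral_const_mul 2 _
    _ = 2 * ∑ p ∈ Finset.Icc 1 N ×ˢ zSet R N, (c p)^2 := by rw [integral_sq_sum hω]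

end Stmt5
namespace Stmt5
open MeasureTheory ProbabilityTheory Filter Topology

lemma indi_sq_mul (p : Prop) (x : ℝ) : (indi p * x)^2 = indi p * x^2 := by
  by_cases hp : p <;> simp [indi, hp]

lemma sum_indi_filter {α : Type*} (T : Finset α) (pred : α → Prop) [DecidablePred pred]
    (f : α → ℝ) : ∑ p ∈ T, indi (pred p) * f p = ∑ p ∈ T.filter pred, f p := by
  rw [Finset.sum_filter]
  refine Finset.sum_congr rfl fun p _ => ?_
  by_cases h : pred p <;> simp [indi, h]

lemma rect_subset {N : ℕ} (hN : 1 ≤ N) {i : ℕ} (hi1 : 1 ≤ i) (hi2 : i ≤ N) (z : ℤ) :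
    rect N i z ⊆ Set.Ioc (0:ℝ) 1 ×ˢ (Set.univ : Set ℝ) := by
  have hN0 : (0:ℝ) < N := by exact_mod_cast hN
  rintro ⟨a, b⟩ hy
  have hy1 := (Set.mem_prod.mp hy).1
  refine Set.mem_prod.mpr ⟨⟨?_, ?_⟩, trivial⟩
  · have h0 : (0:ℝ) ≤ ((i:ℝ) - 1)/N := by
      apply div_nonneg _ hN0.le
      have : (1:ℝ) ≤ (i:ℝ) := by exact_mod_cast hi1
      linarith
    exact lt_of_le_of_lt h0 hy1.1
  · have h1 : (i:ℝ)/N ≤ 1 := by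
      rw [div_le_one hN0]; exact_mod_cast hi2
    exact le_trans hy1.2 h1

lemma rect_disjoint {N : ℕ} (hN : 1 ≤ N) {p p' : ℕ × ℤ} (hne : p ≠ p')
    (hpar : (p.1:ℤ) % 2 = p.2 % 2) (hpar' : (p'.1:ℤ) % 2 = p'.2 % 2) :
    Disjoint (rect N p.1 p.2) (rect N p'.1 p'.2) := by
  have hN0 : (0:ℝ) < N := by exact_mod_cast hN
  have hs : (0:ℝ) < Real.sqrt N := Real.sqrt_pos.mpr hN0
  rw [Set.disjoint_left]
  rintro ⟨a, b⟩ hy hy'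
  have h1 := (Set.mem_prod.mp hy).1; have h2 := (Set.mem_prod.mp hy).2
  have h1' := (Set.mem_prod.mp hy').1; have h2' := (Set.mem_prod.mp hy').2
  have hi : p.1 = p'.1 := by
    by_contra hii
    rcases Nat.lt_or_ge p.1 p'.1 with hlt | hge
    · have hle : (p.1:ℝ) ≤ (p'.1:ℝ) - 1 := by
        have : (p.1:ℝ) + 1 ≤ (p'.1:ℝ) := by exact_mod_cast hlt
        linarith
      have hd : (p.1:ℝ)/N ≤ ((p'.1:ℝ) - 1)/N := (div_le_div_iff_of_pos_right hN0).mpr hle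
      linarith [h1.2, h1'.1]
    · have hlt' : p'.1 < p.1 := lt_of_le_of_ne hge (fun hh => hii hh.symm)
      have hle : (p'.1:ℝ) ≤ (p.1:ℝ) - 1 := by
        have : (p'.1:ℝ) + 1 ≤ (p.1:ℝ) := by exact_mod_cast hlt'
        linarith
      have hd : (p'.1:ℝ)/N ≤ ((p.1:ℝ) - 1)/N := (div_le_div_iff_of_pos_right hN0).mpr hle
      linarith [h1'.2, h1.1]
  have hz : p.2 = p'.2 := by
    by_contra hzz
    have hpp : p.2 % 2 = p'.2 % 2 := by rw [← hpar, ← hpar', hi]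
    have h2le : p.2 + 2 ≤ p'.2 ∨ p'.2 + 2 ≤ p.2 := by omega
    rcases h2le with hl | hl
    · have hle : (p.2:ℝ) + 1 ≤ (p'.2:ℝ) - 1 := by
        have : (p.2:ℝ) + 2 ≤ (p'.2:ℝ) := by exact_mod_cast hl
        linarith
      have hd : ((p.2:ℝ) + 1)/Real.sqrt N ≤ ((p'.2:ℝ) - 1)/Real.sqrt N :=
        (div_le_div_iff_of_pos_right hs).mpr hle
      linarith [h2.2, h2'.1]
    · have hle : (p'.2:ℝ) + 1 ≤ (p.2:ℝ) - 1 := by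
        have : (p'.2:ℝ) + 2 ≤ (p.2:ℝ) := by exact_mod_cast hl
        linarith
      have hd : ((p'.2:ℝ) + 1)/Real.sqrt N ≤ ((p.2:ℝ) - 1)/Real.sqrt N :=
        (div_le_div_iff_of_pos_right hs).mpr hle
      linarith [h2'.2, h2.1]
  exact hne (Prod.ext hi hz)

/-- The step function whose integral is computed. -/
noncomputable def Fstep (g : ℝ × ℝ → ℝ) (A : ℕ × ℤ → ℝ) (N : ℕ) (q : ℝ × ℝ) : ℝ :=
  (rectAvg1 g N (gridTime N q.1) (gridSpace N q.1 q.2)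
    * A (gridTime N q.1, gridSpace N q.1 q.2))^2

lemma Fstep_measurable (g : ℝ × ℝ → ℝ) (A : ℕ × ℤ → ℝ) (N : ℕ) :
    Measurable (Fstep g A N) := by
  have hgt : Measurable (fun q : ℝ × ℝ => gridTime N q.1) := by
    simp only [gridTime]
    exact Nat.measurable_ceil.comp (measurable_fst.const_mul (N:ℝ))
  have hcast : Measurable (fun q : ℝ × ℝ => ((gridTime N q.1 : ℤ) : ℝ)) :=
    (measurable_of_countable (fun n : ℕ => ((n:ℤ):ℝ))).comp hgt
  have hceil : Measurable (fun q : ℝ × ℝ =>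
      ⌈(Real.sqrt N * q.2 - 1 - ((gridTime N q.1 : ℤ):ℝ)) / 2⌉) :=
    Int.measurable_ceil.comp ((((measurable_snd.const_mul (Real.sqrt N)).sub
      measurable_const).sub hcast).div_const 2)
  have hgs : Measurable (fun q : ℝ × ℝ => gridSpace N q.1 q.2) := by
    simp only [gridSpace]
    have h := (measurable_of_countable (fun p : ℤ × ℤ => p.1 + 2 * p.2)).comp
      (((measurable_of_countable (fun n : ℕ => (n:ℤ))).comp hgt).prodMk hceil)
    exact h
  have h := (measurable_of_countable
    (fun p : ℕ × ℤ => (rectAvg1 g N p.1 p.2 * A p)^2)).comp (hgt.prodMk hgs)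
  exact h

lemma abs_Fstep_le {g : ℝ × ℝ → ℝ} (hgm : Measurable g) {Mg : ℝ} (hMg : 0 ≤ Mg)
    (hb : ∀ y, |g y| ≤ Mg) {A : ℕ × ℤ → ℝ} {cA : ℝ} (hA : ∀ p, |A p| ≤ cA)
    (N : ℕ) (q : ℝ × ℝ) : |Fstep g A N q| ≤ (Mg * cA)^2 := by
  have hcA : 0 ≤ cA := le_trans (abs_nonneg _) (hA (0,0))
  rw [Fstep, abs_of_nonneg (sq_nonneg _), ← sq_abs]
  apply pow_le_pow_left₀ (abs_nonneg _) _ 2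
  rw [abs_mul]
  exact mul_le_mul (abs_rectAvg1_le hgm hMg hb N _ _) (hA _) (abs_nonneg _) hMg

/-! ### Part III : the integral identity -/

lemma partIII {g : ℝ × ℝ → ℝ} (hgm : Measurable g) {Mg : ℝ} (hMg : 0 ≤ Mg)
    (hb : ∀ y, |g y| ≤ Mg) {R : ℝ} (hgR : ∀ y : ℝ × ℝ, R < |y.2| → g y = 0)
    {A : ℕ × ℤ → ℝ} {cA : ℝ} (hA : ∀ p, |A p| ≤ cA) {N : ℕ} (hN : 1 ≤ N) :
    ∫ q in Set.Icc (0:ℝ) 1 ×ˢ (Set.univ : Set ℝ), Fstep g A N q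
      = ((1/(N:ℝ)) * (2 / Real.sqrt N)) * ∑ p ∈ Finset.Icc 1 N ×ˢ zSet R N,
          (indi ((p.1:ℤ) % 2 = p.2 % 2) * (rectAvg1 g N p.1 p.2 * A p))^2 := by
  classical
  set W : Finset (ℕ × ℤ) :=
    (Finset.Icc 1 N ×ˢ zSet R N).filter (fun p => (p.1:ℤ) % 2 = p.2 % 2) with hW
  have hWsum : ∑ p ∈ Finset.Icc 1 N ×ˢ zSet R N,
      (indi ((p.1:ℤ) % 2 = p.2 % 2) * (rectAvg1 g N p.1 p.2 * A p))^2
      = ∑ p ∈ W, (rectAvg1 g N p.1 p.2 * A p)^2 := by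
    rw [hW, ← sum_indi_filter]
    exact Finset.sum_congr rfl fun p _ => indi_sq_mul _ _
  have hmemW : ∀ p ∈ W, 1 ≤ p.1 ∧ p.1 ≤ N ∧ (p.1:ℤ) % 2 = p.2 % 2 := by
    intro p hp
    rw [hW, Finset.mem_filter, Finset.mem_product, Finset.mem_Icc] at hp
    exact ⟨hp.1.1.1, hp.1.1.2, hp.2⟩
  have hUsub : (⋃ p ∈ W, rect N p.1 p.2) ⊆ Set.Ioc (0:ℝ) 1 ×ˢ (Set.univ : Set ℝ) := by
    intro q hq
    rw [Set.mem_iUnion₂] at hq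
    obtain ⟨p, hp, hqp⟩ := hq
    exact rect_subset hN (hmemW p hp).1 (hmemW p hp).2.1 p.2 hqp
  have hmeasU : MeasurableSet (⋃ p ∈ W, rect N p.1 p.2) :=
    Finset.measurableSet_biUnion W (fun p _ => rect_measurable N p.1 p.2)
  have hvanish : ∀ q ∈ (Set.Ioc (0:ℝ) 1 ×ˢ (Set.univ : Set ℝ)) \ (⋃ p ∈ W, rect N p.1 p.2),
      Fstep g A N q = 0 := by
    rintro ⟨t, x⟩ ⟨hqs, hqU⟩
    have ht := (Set.mem_prod.mp hqs).1
    have hi1 : 1 ≤ gridTime N t := gridTime_pos hN ht.1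
    have hi2 : gridTime N t ≤ N := gridTime_le ht.2
    have hqrect : ((t, x) : ℝ × ℝ) ∈ rect N (gridTime N t) (gridSpace N t x) :=
      Set.mem_prod.mpr ⟨gridTime_mem hN ht.1, gridSpace_mem hN t x⟩
    by_cases hzZ : gridSpace N t x ∈ zSet R N
    · exfalso
      apply hqU
      rw [Set.mem_iUnion₂]
      refine ⟨(gridTime N t, gridSpace N t x), ?_, hqrect⟩
      rw [hW, Finset.mem_filter, Finset.mem_product, Finset.mem_Icc]
      exact ⟨⟨⟨hi1, hi2⟩, hzZ⟩, gridSpace_parity N t x⟩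
    · have h0 := rectAvg1_vanish hgR hN (not_mem_zSet hzZ) (gridTime N t)
      show (rectAvg1 g N (gridTime N t) (gridSpace N t x) * A _)^2 = 0
      rw [h0]; ring
  have hstep1 : ∫ q in Set.Icc (0:ℝ) 1 ×ˢ (Set.univ : Set ℝ), Fstep g A N q
      = ∫ q in Set.Ioc (0:ℝ) 1 ×ˢ (Set.univ : Set ℝ), Fstep g A N q := by
    apply setIntegral_congr_set
    rw [MeasureTheory.ae_eq_set]
    constructor
    · have hnull : volume (({(0:ℝ)} : Set ℝ) ×ˢ (Set.univ : Set ℝ)) = 0 := by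
        rw [MeasureTheory.Measure.volume_eq_prod, Measure.prod_prod]
        simp
      refine measure_mono_null ?_ hnull
      rintro ⟨a, b⟩ ⟨h1, h2⟩
      have ha := (Set.mem_prod.mp h1).1
      refine Set.mem_prod.mpr ⟨?_, trivial⟩
      have hni : ¬ (a ∈ Set.Ioc (0:ℝ) 1) := fun hc => h2 (Set.mem_prod.mpr ⟨hc, trivial⟩)
      rw [Set.mem_Ioc, not_and_or, not_lt] at hni
      rcases hni with h | h
      · exact Set.mem_singleton_iff.mpr (le_antisymm h ha.1)
      · exact absurd ha.2 h
    · have hempty : (Set.Ioc (0:ℝ) 1 ×ˢ (Set.univ : Set ℝ))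
          \ (Set.Icc (0:ℝ) 1 ×ˢ (Set.univ : Set ℝ)) = ∅ :=
        Set.diff_eq_empty.mpr (Set.prod_mono Set.Ioc_subset_Icc_self subset_rfl)
      rw [hempty]
      exact measure_empty
  have hstep2 : ∫ q in Set.Ioc (0:ℝ) 1 ×ˢ (Set.univ : Set ℝ), Fstep g A N q
      = ∫ q in (⋃ p ∈ W, rect N p.1 p.2), Fstep g A N q := by
    rw [← integral_indicator (measurableSet_Ioc.prod MeasurableSet.univ),
      ← integral_indicator hmeasU]
    congr 1
    funext q
    by_cases hqU : q ∈ ⋃ p ∈ W, rect N p.1 p.2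
    · rw [Set.indicator_of_mem hqU, Set.indicator_of_mem (hUsub hqU)]
    · rw [Set.indicator_of_notMem hqU]
      by_cases hqs : q ∈ Set.Ioc (0:ℝ) 1 ×ˢ (Set.univ : Set ℝ)
      · rw [Set.indicator_of_mem hqs]
        exact hvanish q ⟨hqs, hqU⟩
      · rw [Set.indicator_of_notMem hqs]
  have hdisj : Set.Pairwise ↑W (Function.onFun Disjoint fun p : ℕ × ℤ => rect N p.1 p.2) := by
    intro p hp p' hp' hne
    exact rect_disjoint hN hne (hmemW p (Finset.mem_coe.mp hp)).2.2
      (hmemW p' (Finset.mem_coe.mp hp')).2.2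
  have hstep3 : ∫ q in (⋃ p ∈ W, rect N p.1 p.2), Fstep g A N q
      = ∑ p ∈ W, ∫ q in rect N p.1 p.2, Fstep g A N q :=
    integral_biUnion_finset W (fun p _ => rect_measurable N p.1 p.2) hdisj
      (fun p _ => integrableOn_bdd (Fstep_measurable g A N)
        (abs_Fstep_le hgm hMg hb hA N) vol_rect_lt_top)
  have hstep4 : ∀ p ∈ W, ∫ q in rect N p.1 p.2, Fstep g A N q
      = ((1/(N:ℝ)) * (2 / Real.sqrt N)) * (rectAvg1 g N p.1 p.2 * A p)^2 := by
    intro p hp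
    have hEq : Set.EqOn (Fstep g A N)
        (fun _ => (rectAvg1 g N p.1 p.2 * A p)^2) (rect N p.1 p.2) := by
      rintro ⟨t, x⟩ hq
      have h1 := (Set.mem_prod.mp hq).1
      have h2 := (Set.mem_prod.mp hq).2
      have hi : gridTime N t = p.1 := gridTime_eq hN (hmemW p hp).1 h1
      have hz : gridSpace N t x = p.2 :=
        gridSpace_eq hN (by rw [hi]; exact (hmemW p hp).2.2) h2
      show (rectAvg1 g N (gridTime N t) (gridSpace N t x)
        * A (gridTime N t, gridSpace N t x))^2 = _
      rw [hi, hz]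
    rw [setIntegral_congr_fun (rect_measurable N p.1 p.2) hEq, setIntegral_const,
      measureReal_def, rect_toReal hN, smul_eq_mul]
  calc ∫ q in Set.Icc (0:ℝ) 1 ×ˢ (Set.univ : Set ℝ), Fstep g A N q
      = ∑ p ∈ W, ∫ q in rect N p.1 p.2, Fstep g A N q := by rw [hstep1, hstep2, hstep3]
    _ = ∑ p ∈ W, ((1/(N:ℝ)) * (2 / Real.sqrt N)) * (rectAvg1 g N p.1 p.2 * A p)^2 :=
        Finset.sum_congr rfl hstep4
    _ = ((1/(N:ℝ)) * (2 / Real.sqrt N)) * ∑ p ∈ W, (rectAvg1 g N p.1 p.2 * A p)^2 :=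
        (Finset.mul_sum _ _ _).symm
    _ = _ := by rw [hWsum]

end Stmt5

/-- Suppose `sup_N ‖A_N‖_∞ < ∞` and `A_N([t,x]_N) → a(t,x)` a.e. on
`[0,1] × ℝ` for a bounded measurable `a`. Then for every continuous compactly supported
`g`, `lim_N N^{-3/2} E[(S^N_1(g))²] = ∫_{[0,1]×ℝ} g² a²`. -/
theorem statement5
    {Ω : Type*} [MeasurableSpace Ω] (P : Measure Ω) [IsProbabilityMeasure P]
    (ω : ℕ × ℤ → Ω → ℝ) (hω : IsRademacher P ω)
    (A : ℕ → ℕ × ℤ → ℝ) (c : ℝ) (hA : ∀ N p, |A N p| ≤ c)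
    (aa : ℝ × ℝ → ℝ) (hameas : Measurable aa) (C : ℝ) (haC : ∀ q, |aa q| ≤ C)
    (hconv : ∀ᵐ q ∂(volume.restrict (Set.Icc (0 : ℝ) 1 ×ˢ (Set.univ : Set ℝ))),
      Tendsto (fun N : ℕ => A N (gridTime N q.1, gridSpace N q.1 q.2)) atTop (𝓝 (aa q)))
    (g : ℝ × ℝ → ℝ) (hg : Continuous g) (hgcs : HasCompactSupport g) :
    Tendsto (fun N : ℕ => (N : ℝ) ^ (-(3/2 : ℝ)) * ∫ a, (Ustat1 ω (A N) N g a) ^ 2 ∂P)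
      atTop
      (𝓝 (∫ q in Set.Icc (0 : ℝ) 1 ×ˢ (Set.univ : Set ℝ), (g q) ^ 2 * (aa q) ^ 2)) := by
  classical
  obtain ⟨Mg, hMgn⟩ := hg.bounded_above_of_compact_support hgcs
  have hMg : ∀ y, |g y| ≤ Mg := fun y => by simpa [Real.norm_eq_abs] using hMgn y
  have hMg0 : 0 ≤ Mg := le_trans (abs_nonneg _) (hMg (0, 0))
  have hc0 : 0 ≤ c := le_trans (abs_nonneg _) (hA 0 (0, 0))
  obtain ⟨R0, hR0⟩ := hgcs.isBounded.subset_closedBall (0 : ℝ × ℝ)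
  set R : ℝ := max R0 0 with hRdef
  have hR : 0 ≤ R := le_max_right _ _
  have hgR : ∀ y : ℝ × ℝ, R < |y.2| → g y = 0 := by
    intro y hy
    apply image_eq_zero_of_notMem_tsupport
    intro hmem
    have h1 := hR0 hmem
    rw [Metric.mem_closedBall, Prod.dist_eq] at h1
    have h2 : dist y.2 0 ≤ R0 := le_trans (le_max_right _ _) h1
    rw [Real.dist_eq, sub_zero] at h2
    have h3 : R0 ≤ R := le_max_left _ _
    linarith
  -- dominated convergence for the step functions
  have hFmeas : ∀ N : ℕ, AEStronglyMeasurable (Stmt5.Fstep g (A N) N)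
      (volume.restrict (Set.Icc (0 : ℝ) 1 ×ˢ (Set.univ : Set ℝ))) := fun N =>
    (Stmt5.Fstep_measurable g (A N) N).aestronglyMeasurable.restrict
  have hbsetm : MeasurableSet ((Set.univ : Set ℝ) ×ˢ Set.Icc (-(R+2)) (R+2)) :=
    MeasurableSet.univ.prod measurableSet_Icc
  have hbint : Integrable
      (Set.indicator ((Set.univ : Set ℝ) ×ˢ Set.Icc (-(R+2)) (R+2)) (fun _ => (Mg*c)^2))
      (volume.restrict (Set.Icc (0 : ℝ) 1 ×ˢ (Set.univ : Set ℝ))) := by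
    rw [integrable_indicator_iff hbsetm]
    refine integrableOn_const ?_
    apply ne_of_lt
    rw [Measure.restrict_apply hbsetm]
    refine lt_of_le_of_lt (measure_mono ?_)
      (?_ : volume (Set.Icc (0:ℝ) 1 ×ˢ Set.Icc (-(R+2)) (R+2)) < ⊤)
    · rintro ⟨a, b⟩ ⟨h1, h2⟩
      exact Set.mem_prod.mpr ⟨(Set.mem_prod.mp h2).1, (Set.mem_prod.mp h1).2⟩
    · rw [MeasureTheory.Measure.volume_eq_prod, Measure.prod_prod, Real.volume_Icc,
        Real.volume_Icc]
      exact ENNReal.mul_lt_top ENNReal.ofReal_lt_top ENNReal.ofReal_lt_top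
  have h_bound : ∀ N : ℕ,
      ∀ᵐ q ∂(volume.restrict (Set.Icc (0 : ℝ) 1 ×ˢ (Set.univ : Set ℝ))),
      ‖Stmt5.Fstep g (A N) N q‖
        ≤ Set.indicator ((Set.univ : Set ℝ) ×ˢ Set.Icc (-(R+2)) (R+2))
            (fun _ => (Mg*c)^2) q := by
    intro N
    filter_upwards [ae_restrict_mem (measurableSet_Icc.prod MeasurableSet.univ)] with q hq
    by_cases hx : q.2 ∈ Set.Icc (-(R+2)) (R+2)
    · rw [Set.indicator_of_mem (Set.mem_prod.mpr ⟨Set.mem_univ _, hx⟩)]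
      rw [Real.norm_eq_abs]
      exact Stmt5.abs_Fstep_le hg.measurable hMg0 hMg (hA N) N q
    · rw [Set.indicator_of_notMem (fun hmem => hx (Set.mem_prod.mp hmem).2)]
      have hxa : R + 2 < |q.2| := by
        rw [Set.mem_Icc, not_and_or, not_le, not_le] at hx
        rcases hx with h | h
        · exact lt_of_lt_of_le (by linarith) (neg_le_abs _)
        · exact lt_of_lt_of_le h (le_abs_self _)
      rcases Nat.eq_zero_or_pos N with h0 | hN1
      · subst h0
        simp [Stmt5.Fstep, Stmt5.rectAvg1_zero_N]
      · have h0 := Stmt5.rectAvg1_vanish hgR hN1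
          (Stmt5.gridSpace_large hR hN1 hxa q.1) (gridTime N q.1)
        show ‖(rectAvg1 g N (gridTime N q.1) (gridSpace N q.1 q.2)
          * A N (gridTime N q.1, gridSpace N q.1 q.2))^2‖ ≤ 0
        rw [h0]
        norm_num
  have hzero : ∀ᵐ q ∂(volume.restrict (Set.Icc (0 : ℝ) 1 ×ˢ (Set.univ : Set ℝ))),
      q.1 ≠ (0:ℝ) := by
    rw [MeasureTheory.ae_iff]
    have hnull : volume (({(0:ℝ)} : Set ℝ) ×ˢ (Set.univ : Set ℝ)) = 0 := by
      rw [MeasureTheory.Measure.volume_eq_prod, Measure.prod_prod]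
      simp
    apply measure_mono_null (t := ({(0:ℝ)} : Set ℝ) ×ˢ (Set.univ : Set ℝ))
    · intro q hq
      simp only [Set.mem_setOf_eq, not_not] at hq
      exact Set.mem_prod.mpr ⟨hq, trivial⟩
    · exact le_antisymm (le_trans (Measure.restrict_apply_le _ _) hnull.le) zero_le
  have h_lim : ∀ᵐ q ∂(volume.restrict (Set.Icc (0 : ℝ) 1 ×ˢ (Set.univ : Set ℝ))),
      Tendsto (fun N : ℕ => Stmt5.Fstep g (A N) N q) atTop (𝓝 (g q ^ 2 * aa q ^ 2)) := by
    filter_upwards [hconv, hzero,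
      ae_restrict_mem (measurableSet_Icc.prod MeasurableSet.univ)] with q hq1 hq2 hq3
    have hpos : 0 < q.1 := lt_of_le_of_ne ((Set.mem_prod.mp hq3).1).1 (Ne.symm hq2)
    have h1 := Stmt5.rectAvg1_tendsto hg hMg q.1 q.2 hpos
    have h2 := (h1.mul hq1).pow 2
    have h3 : g (q.1, q.2) = g q := by rw [Prod.mk.eta]
    rw [h3] at h2
    rw [show g q ^ 2 * aa q ^ 2 = (g q * aa q)^2 by ring]
    exact h2
  have hDCT := MeasureTheory.tendsto_integral_of_dominated_convergence _ hFmeas hbint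
    h_bound h_lim
  -- identify the two sequences eventually
  have hmain : (fun N : ℕ => ∫ q in Set.Icc (0:ℝ) 1 ×ˢ (Set.univ : Set ℝ),
        Stmt5.Fstep g (A N) N q)
      =ᶠ[atTop] fun N : ℕ => (N : ℝ) ^ (-(3/2 : ℝ)) * ∫ a, (Ustat1 ω (A N) N g a) ^ 2 ∂P := by
    filter_upwards [eventually_ge_atTop 1] with N hN
    have hN0 : (0:ℝ) < N := by exact_mod_cast hN
    have hs : (0:ℝ) < Real.sqrt N := Real.sqrt_pos.mpr hN0
    rw [Stmt5.partII hω hgR (A N) hN (R := R),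
      Stmt5.partIII hg.measurable hMg0 hMg hgR (hA N) hN (R := R),
      Stmt5.neg_exp hN]
    field_simp
  exact Filter.Tendsto.congr' hmain hDCT
end

section
/- For every positive integer n, the squared L² norm of the n-fold Gaussian transition density on the simplex satisfies ∫_{[0,1]^n} ∫_{ℝ^n} ϱ_n(t,x)² dx dt = 1 / (2^n Γ(n/2 + 1)), where Γ is the Gamma function. -/
open MeasureTheory ProbabilityTheory Filter Topology

section AuxProofs
open MeasureTheory Real Set ENNReal

lemma indi_nonneg (p : Prop) : 0 ≤ indi p := by unfold indi; split <;> norm_num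

lemma indi_pos {p : Prop} (h : p) : indi p = 1 := by unfold indi; simp [h]
lemma indi_neg {p : Prop} (h : ¬ p) : indi p = 0 := by unfold indi; simp [h]

lemma prev_snoc_castSucc {n : ℕ} (t : Fin n → ℝ) (y : ℝ) (j : Fin n) :
    prev (Fin.snoc t y) j.castSucc = prev t j := by
  by_cases h : j.1 = 0
  · simp only [prev, Fin.coe_castSucc, dif_pos h]
  · simp only [prev, Fin.coe_castSucc, dif_neg h]
    have hlt : (j:ℕ) - 1 < n := Nat.lt_of_le_of_lt (Nat.sub_le _ _) j.2
    simp [Fin.snoc, hlt]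

def lastOr : {n : ℕ} → (Fin n → ℝ) → ℝ
  | 0, _ => 0
  | (_+1), t => t (Fin.last _)

lemma prev_snoc_last {n : ℕ} (t : Fin n → ℝ) (y : ℝ) :
    prev (Fin.snoc t y) (Fin.last n) = lastOr t := by
  cases n with
  | zero => simp [prev, lastOr]
  | succ m =>
    simp only [prev, dif_neg (show ¬((Fin.last (m+1)).1 = 0) by simp [Fin.last])]
    have hlt : ((Fin.last (m+1)):ℕ) - 1 < m + 1 := by simp [Fin.last]
    simp [Fin.snoc, hlt, lastOr, Fin.last]

lemma forall_pos_snoc {n : ℕ} (t : Fin n → ℝ) (y : ℝ) :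
    (∀ j, (0:ℝ) < Fin.snoc (α := fun _ => ℝ) t y j) ↔ (∀ j, 0 < t j) ∧ 0 < y := by
  constructor
  · intro h
    exact ⟨fun j => by simpa using h j.castSucc, by simpa using h (Fin.last n)⟩
  · rintro ⟨h1, h2⟩ j
    rcases Fin.eq_castSucc_or_eq_last j with ⟨i, rfl⟩ | rfl
    · simpa using h1 i
    · simpa using h2

lemma strictMono_snoc_iff {n : ℕ} (t : Fin n → ℝ) (y : ℝ) :
    StrictMono (Fin.snoc t y) ↔ StrictMono t ∧ ∀ j, t j < y := by
  constructor
  · intro h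
    constructor
    · intro i j hij
      have := h (show (i.castSucc : Fin (n+1)) < j.castSucc by simpa using hij)
      simpa using this
    · intro j
      have := h (Fin.castSucc_lt_last j)
      simpa using this
  · rintro ⟨hm, hy⟩
    rw [Fin.strictMono_iff_lt_succ]
    intro i
    rcases Fin.eq_castSucc_or_eq_last i.succ with ⟨j, hj⟩ | hj
    · rw [hj, Fin.snoc_castSucc, Fin.snoc_castSucc]
      apply hm
      have : i.castSucc < j.castSucc := by rw [← hj]; exact Fin.castSucc_lt_succ
      simpa using this
    · rw [hj, Fin.snoc_last, Fin.snoc_castSucc]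
      exact hy i

lemma heatK_sq {s : ℝ} (hs : 0 < s) (x : ℝ) :
    heatK s x ^ 2 = Real.exp (-(1/s) * x ^ 2) / (2 * Real.pi * s) := by
  unfold heatK
  rw [div_pow, Real.sq_sqrt (by positivity), ← Real.exp_nat_mul]
  congr 2
  field_simp
  ring

lemma lintegral_heatK_sq {s : ℝ} (hs : 0 < s) (c : ℝ) :
    ∫⁻ y : ℝ, ENNReal.ofReal (heatK s (y - c) ^ 2)
      = ENNReal.ofReal ((2 * Real.sqrt Real.pi)⁻¹ * s ^ (-2⁻¹ : ℝ)) := by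
  have htrans : ∫⁻ y : ℝ, ENNReal.ofReal (heatK s (y - c) ^ 2)
      = ∫⁻ y : ℝ, ENNReal.ofReal (heatK s y ^ 2) := by
    simpa [sub_eq_add_neg] using
      lintegral_add_right_eq_self (fun y => ENNReal.ofReal (heatK s y ^ 2)) (-c)
  rw [htrans]
  have hint : Integrable (fun y : ℝ => heatK s y ^ 2) := by
    have : Integrable (fun y : ℝ => Real.exp (-(1/s) * y ^ 2) / (2 * Real.pi * s)) :=
      (integrable_exp_neg_mul_sq (by positivity)).div_const _
    exact this.congr (Filter.Eventually.of_forall fun y => (heatK_sq hs y).symm)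
  rw [← ofReal_integral_eq_lintegral_ofReal hint
    (Filter.Eventually.of_forall fun y => sq_nonneg _)]
  congr 1
  calc ∫ y : ℝ, heatK s y ^ 2
      = ∫ y : ℝ, Real.exp (-(1/s) * y ^ 2) / (2 * Real.pi * s) := by
        congr 1; funext y; exact heatK_sq hs y
    _ = (∫ y : ℝ, Real.exp (-(1/s) * y ^ 2)) / (2 * Real.pi * s) := by
        rw [integral_div]
    _ = Real.sqrt (Real.pi * s) / (2 * Real.pi * s) := by
        rw [integral_gaussian, show Real.pi / (1/s) = Real.pi * s by field_simp]
    _ = (2 * Real.sqrt Real.pi)⁻¹ * s ^ (-2⁻¹ : ℝ) := by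
        have h1 : Real.sqrt Real.pi * Real.sqrt Real.pi = Real.pi := Real.mul_self_sqrt Real.pi_pos.le
        have h2 : Real.sqrt s * Real.sqrt s = s := Real.mul_self_sqrt hs.le
        have h3 : s ^ (-2⁻¹ : ℝ) = (Real.sqrt s)⁻¹ := by
          rw [Real.rpow_neg hs.le, Real.sqrt_eq_rpow]; norm_num
        have h4 : Real.sqrt (Real.pi * s) = Real.sqrt Real.pi * Real.sqrt s :=
          Real.sqrt_mul Real.pi_pos.le s
        have hπ : 0 < Real.sqrt Real.pi := Real.sqrt_pos.mpr Real.pi_pos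
        have hσ : 0 < Real.sqrt s := Real.sqrt_pos.mpr hs
        rw [h3, h4]
        field_simp
        nlinarith [h1, h2, hπ, hσ]

lemma lintegral_snoc_peel {n : ℕ} (F : (Fin (n+1) → ℝ) → ℝ≥0∞) (hF : Measurable F) :
    ∫⁻ x : Fin (n+1) → ℝ, F x = ∫⁻ y : ℝ, ∫⁻ p : Fin n → ℝ, F (Fin.snoc p y) := by
  have hmp := (MeasureTheory.volume_preserving_piFinSuccAbove
    (fun _ : Fin (n+1) => ℝ) (Fin.last n)).symm
  rw [← hmp.lintegral_comp hF]
  have hm : Measurable fun a : ℝ × (Fin n → ℝ) =>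
      F ((MeasurableEquiv.piFinSuccAbove (fun _ : Fin (n+1) => ℝ) (Fin.last n)).symm a) :=
    hF.comp hmp.measurable
  rw [MeasureTheory.Measure.volume_eq_prod, MeasureTheory.lintegral_prod _ hm.aemeasurable]
  congr 1; funext y; congr 1; funext p
  congr 1
  show (MeasurableEquiv.piFinSuccAbove (fun _ : Fin (n+1) => ℝ) (Fin.last n)).symm (y, p)
      = Fin.snoc p y
  rw [MeasurableEquiv.piFinSuccAbove_symm_apply]
  exact Fin.insertNth_last' y p

lemma lintegral_snoc_peel' {n : ℕ} (F : (Fin (n+1) → ℝ) → ℝ≥0∞) (hF : Measurable F) :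
    ∫⁻ x : Fin (n+1) → ℝ, F x = ∫⁻ p : Fin n → ℝ, ∫⁻ y : ℝ, F (Fin.snoc p y) := by
  have hmp := (MeasureTheory.volume_preserving_piFinSuccAbove
    (fun _ : Fin (n+1) => ℝ) (Fin.last n)).symm
  rw [← hmp.lintegral_comp hF]
  have hm : Measurable fun a : ℝ × (Fin n → ℝ) =>
      F ((MeasurableEquiv.piFinSuccAbove (fun _ : Fin (n+1) => ℝ) (Fin.last n)).symm a) :=
    hF.comp hmp.measurable
  rw [MeasureTheory.Measure.volume_eq_prod, MeasureTheory.lintegral_prod_symm _ hm.aemeasurable]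
  congr 1; funext p; congr 1; funext y
  congr 1
  show (MeasurableEquiv.piFinSuccAbove (fun _ : Fin (n+1) => ℝ) (Fin.last n)).symm (y, p)
      = Fin.snoc p y
  rw [MeasurableEquiv.piFinSuccAbove_symm_apply]
  exact Fin.insertNth_last' y p

lemma measurable_heatK1 (s : ℝ) : Measurable (heatK s) := by
  unfold heatK; fun_prop

lemma measurable_prev {n : ℕ} (j : Fin n) : Measurable fun s : Fin n → ℝ => prev s j := by
  unfold prev
  by_cases h : j.1 = 0
  · simp only [dif_pos h]; exact measurable_const
  · simp only [dif_neg h]; exact measurable_pi_apply _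

lemma measurable_gap_factor {n : ℕ} (d : Fin n → ℝ) (j : Fin n) :
    Measurable fun x : Fin n → ℝ => heatK (d j) (x j - prev x j) ^ 2 :=
  ((measurable_heatK1 (d j)).comp ((measurable_pi_apply j).sub (measurable_prev j))).pow_const 2

lemma xlem (n : ℕ) : ∀ d : Fin n → ℝ, (∀ j, 0 < d j) →
    ∫⁻ x : Fin n → ℝ, ENNReal.ofReal (∏ j, heatK (d j) (x j - prev x j) ^ 2)
      = ENNReal.ofReal (∏ j, ((2 * Real.sqrt Real.pi)⁻¹ * d j ^ (-2⁻¹ : ℝ))) := by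
  induction n with
  | zero =>
    intro d hd
    simp only [Fin.prod_univ_zero, ENNReal.ofReal_one, lintegral_one, volume_pi,
      Measure.pi_univ]

  | succ n ih =>
    intro d hd
    have hF : Measurable fun x : Fin (n+1) → ℝ =>
        ENNReal.ofReal (∏ j, heatK (d j) (x j - prev x j) ^ 2) :=
      ENNReal.measurable_ofReal.comp
        (Finset.measurable_prod _ fun j _ => measurable_gap_factor d j)
    rw [lintegral_snoc_peel' _ hF]
    have hstep : ∀ (p : Fin n → ℝ) (y : ℝ),
        (∏ j, heatK (d j) (Fin.snoc (α := fun _ => ℝ) p y j - prev (Fin.snoc p y) j) ^ 2)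
        = (∏ j : Fin n, heatK (d j.castSucc) (p j - prev p j) ^ 2)
            * heatK (d (Fin.last n)) (y - lastOr p) ^ 2 := by
      intro p y
      rw [Fin.prod_univ_castSucc]
      congr 1
      · exact Finset.prod_congr rfl fun j _ => by rw [Fin.snoc_castSucc, prev_snoc_castSucc]
      · rw [Fin.snoc_last, prev_snoc_last]
    have hApos : ∀ p : Fin n → ℝ,
        (0:ℝ) ≤ ∏ j : Fin n, heatK (d j.castSucc) (p j - prev p j) ^ 2 :=
      fun p => Finset.prod_nonneg fun j _ => sq_nonneg _
    have hinner : ∀ p : Fin n → ℝ,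
        ∫⁻ y : ℝ, ENNReal.ofReal (∏ j, heatK (d j) (Fin.snoc (α := fun _ => ℝ) p y j - prev (Fin.snoc p y) j) ^ 2)
        = ENNReal.ofReal (∏ j : Fin n, heatK (d j.castSucc) (p j - prev p j) ^ 2)
            * ENNReal.ofReal ((2 * Real.sqrt Real.pi)⁻¹ * d (Fin.last n) ^ (-2⁻¹ : ℝ)) := by
      intro p
      calc ∫⁻ y : ℝ, ENNReal.ofReal (∏ j, heatK (d j) (Fin.snoc (α := fun _ => ℝ) p y j - prev (Fin.snoc p y) j) ^ 2)
          = ∫⁻ y : ℝ, ENNReal.ofReal (∏ j : Fin n, heatK (d j.castSucc) (p j - prev p j) ^ 2)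
              * ENNReal.ofReal (heatK (d (Fin.last n)) (y - lastOr p) ^ 2) := by
            refine lintegral_congr fun y => ?_
            rw [hstep p y, ENNReal.ofReal_mul (hApos p)]
        _ = ENNReal.ofReal (∏ j : Fin n, heatK (d j.castSucc) (p j - prev p j) ^ 2)
              * ∫⁻ y : ℝ, ENNReal.ofReal (heatK (d (Fin.last n)) (y - lastOr p) ^ 2) := by
            have hg : Measurable fun y : ℝ =>
                ENNReal.ofReal (heatK (d (Fin.last n)) (y - lastOr p) ^ 2) :=
              ENNReal.measurable_ofReal.comp
                (((measurable_heatK1 _).comp (measurable_id.sub measurable_const)).pow_const 2)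
            rw [lintegral_const_mul _ hg]
        _ = ENNReal.ofReal (∏ j : Fin n, heatK (d j.castSucc) (p j - prev p j) ^ 2)
              * ENNReal.ofReal ((2 * Real.sqrt Real.pi)⁻¹ * d (Fin.last n) ^ (-2⁻¹ : ℝ)) := by
            rw [lintegral_heatK_sq (hd (Fin.last n))]
    calc ∫⁻ p : Fin n → ℝ, ∫⁻ y : ℝ,
          ENNReal.ofReal (∏ j, heatK (d j) (Fin.snoc (α := fun _ => ℝ) p y j - prev (Fin.snoc p y) j) ^ 2)
        = ∫⁻ p : Fin n → ℝ,
            ENNReal.ofReal (∏ j : Fin n, heatK (d j.castSucc) (p j - prev p j) ^ 2)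
            * ENNReal.ofReal ((2 * Real.sqrt Real.pi)⁻¹ * d (Fin.last n) ^ (-2⁻¹ : ℝ)) :=
          lintegral_congr hinner
      _ = (∫⁻ p : Fin n → ℝ,
            ENNReal.ofReal (∏ j : Fin n, heatK (d j.castSucc) (p j - prev p j) ^ 2))
            * ENNReal.ofReal ((2 * Real.sqrt Real.pi)⁻¹ * d (Fin.last n) ^ (-2⁻¹ : ℝ)) := by
          have hA : Measurable fun p : Fin n → ℝ =>
              ENNReal.ofReal (∏ j : Fin n, heatK (d j.castSucc) (p j - prev p j) ^ 2) :=
            ENNReal.measurable_ofReal.comp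
              (Finset.measurable_prod _ fun j _ => measurable_gap_factor (fun i => d i.castSucc) j)
          rw [lintegral_mul_const _ hA]
      _ = ENNReal.ofReal (∏ j : Fin n, ((2 * Real.sqrt Real.pi)⁻¹ * d j.castSucc ^ (-2⁻¹ : ℝ)))
            * ENNReal.ofReal ((2 * Real.sqrt Real.pi)⁻¹ * d (Fin.last n) ^ (-2⁻¹ : ℝ)) := by
          rw [ih (fun j => d j.castSucc) (fun j => hd j.castSucc)]
      _ = ENNReal.ofReal (∏ j, ((2 * Real.sqrt Real.pi)⁻¹ * d j ^ (-2⁻¹ : ℝ))) := by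
          rw [← ENNReal.ofReal_mul (Finset.prod_nonneg fun j _ =>
              mul_nonneg (by positivity) (Real.rpow_nonneg (hd _).le _)),
            Fin.prod_univ_castSucc]

noncomputable def Gre (n : ℕ) (s : Fin n → ℝ) : ℝ :=
  indi ((∀ j, 0 < s j) ∧ StrictMono s) * ∏ j, (s j - prev s j) ^ (-2⁻¹ : ℝ)

lemma indi_congr {p q : Prop} (h : p ↔ q) : indi p = indi q := by
  by_cases hp : p
  · rw [indi_pos hp, indi_pos (h.mp hp)]
  · rw [indi_neg hp, indi_neg fun hq => hp (h.mpr hq)]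

lemma indi_mul (p q : Prop) : indi (p ∧ q) = indi p * indi q := by
  unfold indi
  by_cases hp : p <;> by_cases hq : q <;> simp [hp, hq]

lemma gaps_pos {n : ℕ} {s : Fin n → ℝ} (h : (∀ j, 0 < s j) ∧ StrictMono s) (j : Fin n) :
    0 < s j - prev s j := by
  obtain ⟨h1, h2⟩ := h
  unfold prev
  by_cases hj : j.1 = 0
  · rw [dif_pos hj, sub_zero]; exact h1 j
  · rw [dif_neg hj]
    have hlt : (⟨j.1 - 1, Nat.lt_of_le_of_lt (Nat.sub_le _ _) j.2⟩ : Fin n) < j := by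
      rw [Fin.lt_def]; simp; omega
    have := h2 hlt
    linarith

lemma Gre_nonneg (n : ℕ) (s : Fin n → ℝ) : 0 ≤ Gre n s := by
  unfold Gre
  by_cases h : (∀ j, 0 < s j) ∧ StrictMono s
  · refine mul_nonneg (indi_nonneg _) (Finset.prod_nonneg fun j _ =>
      Real.rpow_nonneg (gaps_pos h j).le _)
  · rw [indi_neg h, zero_mul]

lemma measurableSet_strictMono (n : ℕ) : MeasurableSet {s : Fin n → ℝ | StrictMono s} := by
  rw [show {s : Fin n → ℝ | StrictMono s}
      = ⋂ (p : Fin n × Fin n), {s | p.1 < p.2 → s p.1 < s p.2} by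
    ext s; constructor
    · intro h; simp only [Set.mem_iInter]; intro p; exact fun hp => h hp
    · intro h i j hij; exact (Set.mem_iInter.mp h (i, j)) hij]
  refine MeasurableSet.iInter fun p => ?_
  by_cases hp : p.1 < p.2
  · rw [show {s : Fin n → ℝ | p.1 < p.2 → s p.1 < s p.2} = {s | s p.1 < s p.2} by
      ext; simp [hp]]
    exact measurableSet_lt (measurable_pi_apply _) (measurable_pi_apply _)
  · rw [show {s : Fin n → ℝ | p.1 < p.2 → s p.1 < s p.2} = Set.univ by ext; simp [hp]]
    exact MeasurableSet.univ

lemma measurableSet_Gcond (n : ℕ) :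
    MeasurableSet {s : Fin n → ℝ | (∀ j, 0 < s j) ∧ StrictMono s} := by
  have h1 : MeasurableSet {s : Fin n → ℝ | ∀ j, 0 < s j} := by
    rw [show {s : Fin n → ℝ | ∀ j, 0 < s j} = ⋂ j, {s | 0 < s j} by ext; simp]
    exact MeasurableSet.iInter fun j => measurableSet_lt measurable_const (measurable_pi_apply j)
  exact h1.inter (measurableSet_strictMono n)

lemma measurable_indi {α : Type*} [MeasurableSpace α] {P : α → Prop}
    (h : MeasurableSet {a | P a}) : Measurable fun a => indi (P a) := by
  have : (fun a => indi (P a)) = Set.indicator {a | P a} (fun _ => (1:ℝ)) := by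
    funext a
    by_cases ha : P a
    · simp [indi, Set.indicator, ha]
    · simp [indi, Set.indicator, ha]
  rw [this]
  exact measurable_const.indicator h

lemma measurable_Gre (n : ℕ) : Measurable (Gre n) := by
  unfold Gre
  refine (measurable_indi (measurableSet_Gcond n)).mul
    (Finset.measurable_prod _ fun j _ => ?_)
  have hp := measurable_prev (n := n) j
  fun_prop

lemma measurable_snoc_right {m : ℕ} (u : ℝ) :
    Measurable fun t : Fin m → ℝ => (Fin.snoc t u : Fin (m+1) → ℝ) := by
  rw [measurable_pi_iff]
  intro j
  rcases Fin.eq_castSucc_or_eq_last j with ⟨i, rfl⟩ | rfl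
  · simp only [Fin.snoc_castSucc]; exact measurable_pi_apply i
  · simp only [Fin.snoc_last]; exact measurable_const

lemma lastOr_snoc {n : ℕ} (t : Fin n → ℝ) (y : ℝ) : lastOr (Fin.snoc t y) = y := by
  show (Fin.snoc t y : Fin (n+1) → ℝ) (Fin.last n) = y
  exact Fin.snoc_last _ _

lemma Gre_snoc (k : ℕ) (q : Fin k → ℝ) (u : ℝ) :
    Gre (k+1) (Fin.snoc q u)
      = Gre k q * (indi ((∀ j, q j < u) ∧ 0 < u) * (u - lastOr q) ^ (-2⁻¹ : ℝ)) := by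
  unfold Gre
  have hcond : ((∀ j, (0:ℝ) < Fin.snoc (α := fun _ => ℝ) q u j) ∧ StrictMono (Fin.snoc q u))
      ↔ (((∀ j, 0 < q j) ∧ StrictMono q) ∧ ((∀ j, q j < u) ∧ 0 < u)) := by
    rw [forall_pos_snoc, strictMono_snoc_iff]; tauto
  rw [indi_congr hcond, indi_mul]
  have hprod : (∏ j : Fin (k+1),
        ((Fin.snoc q u : Fin (k+1) → ℝ) j - prev (Fin.snoc q u) j) ^ (-2⁻¹ : ℝ))
      = (∏ j : Fin k, (q j - prev q j) ^ (-2⁻¹ : ℝ)) * (u - lastOr q) ^ (-2⁻¹ : ℝ) := by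
    rw [Fin.prod_univ_castSucc]
    congr 1
    · exact Finset.prod_congr rfl fun j _ => by rw [Fin.snoc_castSucc, prev_snoc_castSucc]
    · rw [Fin.snoc_last, prev_snoc_last]
  rw [hprod]
  ring

lemma key_absorb (m : ℕ) (p : Fin m → ℝ) (y u : ℝ) :
    Gre (m+1) (Fin.snoc p y) * indi ((∀ j, (Fin.snoc p y : Fin (m+1) → ℝ) j < u) ∧ 0 < u)
      = Gre (m+1) (Fin.snoc p y) * indi (y < u ∧ 0 < u) := by
  by_cases hg : (∀ j, (0:ℝ) < Fin.snoc (α := fun _ => ℝ) p y j) ∧ StrictMono (Fin.snoc p y)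
  · congr 1
    refine indi_congr (and_congr_left' ?_)
    constructor
    · intro h; simpa using h (Fin.last m)
    · intro h j
      rcases Fin.eq_castSucc_or_eq_last j with ⟨i, rfl⟩ | rfl
      · rw [Fin.snoc_castSucc]
        have := ((strictMono_snoc_iff p y).mp hg.2).2 i
        linarith
      · simpa using h
  · unfold Gre
    rw [indi_neg hg]
    ring


theorem real_beta {a b : ℝ} (ha : 0 < a) (hb : 0 < b) :
    ∫ x in (0:ℝ)..1, x ^ (a-1) * (1-x) ^ (b-1)
      = Real.Gamma a * Real.Gamma b / Real.Gamma (a+b) := by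
  have hc := Complex.Gamma_mul_Gamma_eq_betaIntegral (s := (a:ℂ)) (t := (b:ℂ))
    (by simpa using ha) (by simpa using hb)
  have hβ : Complex.betaIntegral (a:ℂ) (b:ℂ)
      = ((∫ x in (0:ℝ)..1, x ^ (a-1) * (1-x) ^ (b-1) : ℝ) : ℂ) := by
    rw [Complex.betaIntegral, ← intervalIntegral.integral_ofReal]
    refine intervalIntegral.integral_congr fun x hx => ?_
    rw [Set.uIcc_of_le (by norm_num)] at hx
    rw [Complex.ofReal_mul, Complex.ofReal_cpow hx.1,
      Complex.ofReal_cpow (by linarith [hx.2] : (0:ℝ) ≤ 1 - x)]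
    push_cast
    ring
  have hΓpos := Real.Gamma_pos_of_pos (show (0:ℝ) < a + b by linarith)
  have hcast : ((a:ℂ)+(b:ℂ)) = ((a+b : ℝ):ℂ) := by push_cast; ring
  rw [hβ, hcast, Complex.Gamma_ofReal, Complex.Gamma_ofReal, Complex.Gamma_ofReal] at hc
  have hr : Real.Gamma a * Real.Gamma b
      = Real.Gamma (a+b) * ∫ x in (0:ℝ)..1, x ^ (a-1) * (1-x) ^ (b-1) := by
    exact_mod_cast hc
  rw [eq_div_iff hΓpos.ne']
  linarith [hr]

theorem beta_intervalIntegrable {a b u : ℝ} (ha : 0 < a) (hb : 0 < b) (hu : 0 < u) :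
    IntervalIntegrable (fun s => s ^ (a-1) * (u-s) ^ (b-1)) volume 0 u := by
  have h1 : IntervalIntegrable (fun s => s ^ (a-1) * (u-s) ^ (b-1)) volume 0 (u/2) := by
    refine (intervalIntegral.intervalIntegrable_rpow' (by linarith)).mul_continuousOn ?_
    refine ContinuousOn.rpow_const (by fun_prop) fun x hx => Or.inl ?_
    rw [Set.uIcc_of_le (by linarith)] at hx
    intro h; nlinarith [hx.2]
  have h2 : IntervalIntegrable (fun s => s ^ (a-1) * (u-s) ^ (b-1)) volume (u/2) u := by
    have hbase : IntervalIntegrable (fun s => (u-s) ^ (b-1)) volume (u/2) u := by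
      have := (intervalIntegral.intervalIntegrable_rpow' (r := b-1) (a := u - u/2) (b := u - u) (by linarith)).comp_sub_left u
      simpa using this
    have h2' : IntervalIntegrable (fun s => (u-s) ^ (b-1) * s ^ (a-1)) volume (u/2) u := by
      refine hbase.mul_continuousOn ?_
      refine ContinuousOn.rpow_const (by fun_prop) fun x hx => Or.inl ?_
      rw [Set.uIcc_of_le (by linarith)] at hx
      intro h; nlinarith [hx.1]
    simpa [mul_comm] using h2'
  exact h1.trans h2

theorem real_beta_scaled {a b u : ℝ} (ha : 0 < a) (hb : 0 < b) (hu : 0 < u) :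
    ∫ s in (0:ℝ)..u, s ^ (a-1) * (u-s) ^ (b-1)
      = u ^ (a+b-1) * (Real.Gamma a * Real.Gamma b / Real.Gamma (a+b)) := by
  have h := intervalIntegral.integral_comp_mul_left
    (f := fun s => s ^ (a-1) * (u-s) ^ (b-1)) (a := 0) (b := 1) (c := u) hu.ne'
  rw [mul_zero, mul_one] at h
  beta_reduce at h
  have h2 : ∫ x in (0:ℝ)..1, (u*x) ^ (a-1) * (u - u*x) ^ (b-1)
      = u ^ (a-1) * u ^ (b-1) * ∫ x in (0:ℝ)..1, x ^ (a-1) * (1-x) ^ (b-1) := by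
    rw [← intervalIntegral.integral_const_mul]
    refine intervalIntegral.integral_congr fun x hx => ?_
    rw [Set.uIcc_of_le (by norm_num)] at hx
    rw [show u - u*x = u * (1-x) by ring, Real.mul_rpow hu.le hx.1,
      Real.mul_rpow hu.le (by linarith [hx.2])]
    ring
  rw [h2, real_beta ha hb, eq_comm, inv_smul_eq_iff₀ hu.ne'] at h
  rw [h, smul_eq_mul, show a+b-1 = (a-1)+((b-1)+1) by ring, Real.rpow_add hu,
    Real.rpow_add hu, Real.rpow_one]
  ring

lemma Tlem (m : ℕ) : ∀ u : ℝ,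
    ∫⁻ p : Fin m → ℝ, ENNReal.ofReal (Gre (m+1) (Fin.snoc p u))
      = ENNReal.ofReal (indi (0 < u)
          * (Real.pi ^ (((m:ℝ)+1)/2) / Real.Gamma (((m:ℝ)+1)/2)) * u ^ (((m:ℝ)-1)/2)) := by
  induction m with
  | zero =>
    intro u
    have hval : ∀ p : Fin 0 → ℝ, Gre 1 (Fin.snoc p u) = indi (0 < u) * u ^ (-2⁻¹:ℝ) := by
      intro p
      unfold Gre
      have h1 : ((∀ j, (0:ℝ) < Fin.snoc (α := fun _ => ℝ) p u j) ∧ StrictMono (Fin.snoc p u))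
          ↔ (0 < u) := by
        constructor
        · intro h; have h' := h.1 (Fin.last 0); rwa [Fin.snoc_last] at h'
        · intro h
          refine ⟨fun j => ?_, fun a b hab => absurd (Fin.lt_def.mp hab)
            (by have ha := a.2; have hb := b.2; omega)⟩
          have hj : j = Fin.last 0 := Subsingleton.elim (α := Fin 1) j (Fin.last 0)
          rw [hj, Fin.snoc_last]; exact h
      rw [indi_congr h1, Fin.prod_univ_one]
      congr 2
      have h0 : (Fin.snoc p u : Fin 1 → ℝ) 0 = u := by
        have : (0 : Fin 1) = Fin.last 0 := rfl
        rw [this, Fin.snoc_last]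
      have hprev : prev (Fin.snoc p u : Fin 1 → ℝ) 0 = 0 := by
        simp [prev]
      rw [h0, hprev, sub_zero]
    have hone : Real.pi ^ (((0:ℝ)+1)/2) / Real.Gamma (((0:ℝ)+1)/2) = 1 := by
      rw [show ((0:ℝ)+1)/2 = 1/2 by norm_num, Real.Gamma_one_half_eq, Real.sqrt_eq_rpow]
      exact div_self (by positivity)
    calc ∫⁻ p : Fin 0 → ℝ, ENNReal.ofReal (Gre 1 (Fin.snoc p u))
        = ∫⁻ _p : Fin 0 → ℝ, ENNReal.ofReal (indi (0 < u) * u ^ (-2⁻¹:ℝ)) :=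
          lintegral_congr fun p => by rw [hval p]
      _ = ENNReal.ofReal (indi (0 < u) * u ^ (-2⁻¹:ℝ)) := by
          rw [lintegral_const, volume_pi, Measure.pi_univ]
          simp
      _ = _ := by
          push_cast
          rw [hone, show ((0:ℝ)-1)/2 = (-2⁻¹:ℝ) by norm_num]
          congr 1
          ring
  | succ m ih =>
    intro u
    have hH : Measurable fun t : Fin (m+1) → ℝ =>
        ENNReal.ofReal (Gre (m+1+1) (Fin.snoc t u)) :=
      ENNReal.measurable_ofReal.comp ((measurable_Gre (m+1+1)).comp (measurable_snoc_right u))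
    rw [lintegral_snoc_peel _ hH]
    have hinner : ∀ y : ℝ,
        ∫⁻ p : Fin m → ℝ, ENNReal.ofReal (Gre (m+1+1) (Fin.snoc (Fin.snoc p y) u))
        = ENNReal.ofReal (indi (0 < y)
              * (Real.pi ^ (((m:ℝ)+1)/2) / Real.Gamma (((m:ℝ)+1)/2)) * y ^ (((m:ℝ)-1)/2))
            * ENNReal.ofReal (indi (y < u ∧ 0 < u) * (u - y) ^ (-2⁻¹:ℝ)) := by
      intro y
      have hpt : ∀ p : Fin m → ℝ,
          Gre (m+1+1) (Fin.snoc (Fin.snoc p y) u)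
          = Gre (m+1) (Fin.snoc p y) * (indi (y < u ∧ 0 < u) * (u - y) ^ (-2⁻¹:ℝ)) := by
        intro p
        rw [Gre_snoc (m+1) (Fin.snoc p y) u, lastOr_snoc]
        rw [show Gre (m+1) (Fin.snoc p y)
              * (indi ((∀ j, (Fin.snoc p y : Fin (m+1) → ℝ) j < u) ∧ 0 < u)
                * (u - y) ^ (-2⁻¹:ℝ))
            = (Gre (m+1) (Fin.snoc p y)
                * indi ((∀ j, (Fin.snoc p y : Fin (m+1) → ℝ) j < u) ∧ 0 < u))
              * (u - y) ^ (-2⁻¹:ℝ) by ring, key_absorb]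
        ring
      calc ∫⁻ p : Fin m → ℝ, ENNReal.ofReal (Gre (m+1+1) (Fin.snoc (Fin.snoc p y) u))
          = ∫⁻ p : Fin m → ℝ, ENNReal.ofReal (Gre (m+1) (Fin.snoc p y))
              * ENNReal.ofReal (indi (y < u ∧ 0 < u) * (u - y) ^ (-2⁻¹:ℝ)) := by
            refine lintegral_congr fun p => ?_
            rw [hpt p, ENNReal.ofReal_mul (Gre_nonneg _ _)]
        _ = (∫⁻ p : Fin m → ℝ, ENNReal.ofReal (Gre (m+1) (Fin.snoc p y)))
              * ENNReal.ofReal (indi (y < u ∧ 0 < u) * (u - y) ^ (-2⁻¹:ℝ)) := by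
            have hA : Measurable fun p : Fin m → ℝ =>
                ENNReal.ofReal (Gre (m+1) (Fin.snoc p y)) :=
              ENNReal.measurable_ofReal.comp
                ((measurable_Gre (m+1)).comp (measurable_snoc_right y))
            rw [lintegral_mul_const _ hA]
        _ = _ := by rw [ih y]
    rw [lintegral_congr hinner]
    have hΓa : 0 < Real.Gamma (((m:ℝ)+1)/2) := Real.Gamma_pos_of_pos (by positivity)
    set K : ℝ := Real.pi ^ (((m:ℝ)+1)/2) / Real.Gamma (((m:ℝ)+1)/2) with hK
    have hKpos : 0 < K := div_pos (Real.rpow_pos_of_pos Real.pi_pos _) hΓa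
    by_cases hu : 0 < u
    · -- main case
      have ha : 0 < ((m:ℝ)+1)/2 := by positivity
      have hb : 0 < (1:ℝ)/2 := by norm_num
      have hpt2 : ∀ y : ℝ,
          ENNReal.ofReal (indi (0 < y) * K * y ^ (((m:ℝ)-1)/2))
            * ENNReal.ofReal (indi (y < u ∧ 0 < u) * (u - y) ^ (-2⁻¹:ℝ))
          = (Set.Ioo (0:ℝ) u).indicator
              (fun y => ENNReal.ofReal (K * (y ^ (((m:ℝ)+1)/2 - 1) * (u - y) ^ ((1:ℝ)/2 - 1)))) y := by
        intro y
        by_cases hy : y ∈ Set.Ioo (0:ℝ) u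
        · rw [Set.indicator_of_mem hy, indi_pos hy.1, indi_pos ⟨hy.2, hu⟩, one_mul, one_mul]
          rw [← ENNReal.ofReal_mul (mul_nonneg hKpos.le (Real.rpow_nonneg hy.1.le _))]
          congr 1
          rw [show (((m:ℝ)-1)/2) = ((m:ℝ)+1)/2 - 1 by ring,
            show (-2⁻¹:ℝ) = (1:ℝ)/2 - 1 by norm_num]
          ring
        · rw [Set.indicator_of_notMem hy]
          simp only [Set.mem_Ioo, not_and_or, not_lt] at hy
          rcases hy with hy0 | hyu
          · rw [indi_neg (show ¬(0 < y) by exact not_lt.mpr hy0), zero_mul, zero_mul,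
              ENNReal.ofReal_zero, zero_mul]
          · rw [indi_neg (show ¬(y < u ∧ 0 < u) by rintro ⟨h1, _⟩; exact absurd h1 (not_lt.mpr hyu)),
              zero_mul, ENNReal.ofReal_zero, mul_zero]
      rw [lintegral_congr hpt2, lintegral_indicator measurableSet_Ioo]
      have hIntOn : IntegrableOn
          (fun y => K * (y ^ (((m:ℝ)+1)/2 - 1) * (u - y) ^ ((1:ℝ)/2 - 1))) (Set.Ioo 0 u) := by
        have h0 : IntegrableOn (fun y => y ^ (((m:ℝ)+1)/2 - 1) * (u - y) ^ ((1:ℝ)/2 - 1))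
            (Set.Ioc 0 u) :=
          (intervalIntegrable_iff_integrableOn_Ioc_of_le hu.le).mp
            (beta_intervalIntegrable ha hb hu)
        exact (h0.mono_set Set.Ioo_subset_Ioc_self).const_mul K
      have hnn : (0 : ℝ → ℝ) ≤ᶠ[MeasureTheory.ae (volume.restrict (Set.Ioo 0 u))]
          fun y => K * (y ^ (((m:ℝ)+1)/2 - 1) * (u - y) ^ ((1:ℝ)/2 - 1)) := by
        have := (ae_restrict_iff' (μ := volume) measurableSet_Ioo
            (p := fun y : ℝ => 0 ≤ K * (y ^ (((m:ℝ)+1)/2 - 1) * (u - y) ^ ((1:ℝ)/2 - 1)))).mpr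
          (Filter.Eventually.of_forall fun y (hy : y ∈ Set.Ioo (0:ℝ) u) =>
            mul_nonneg hKpos.le (mul_nonneg (Real.rpow_nonneg hy.1.le _)
              (Real.rpow_nonneg (by linarith [hy.2]) _)))
        exact this
      rw [← ofReal_integral_eq_lintegral_ofReal hIntOn hnn]
      rw [MeasureTheory.integral_const_mul, ← integral_Ioc_eq_integral_Ioo,
        ← intervalIntegral.integral_of_le hu.le, real_beta_scaled ha hb hu]
      congr 1
      rw [indi_pos hu]
      push_cast
      have hΓb : 0 < Real.Gamma (((m:ℝ)+1)/2 + 1/2) := Real.Gamma_pos_of_pos (by positivity)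
      rw [show ((m:ℝ)+1+1)/2 = ((m:ℝ)+1)/2 + 1/2 by ring,
        show ((m:ℝ)+1-1)/2 = ((m:ℝ)+1)/2 + (1:ℝ)/2 - 1 by ring,
        Real.rpow_add Real.pi_pos, Real.Gamma_one_half_eq, Real.sqrt_eq_rpow]
      rw [hK]
      field_simp
    · -- u ≤ 0 : both sides vanish
      have hz : ∀ y : ℝ,
          ENNReal.ofReal (indi (0 < y) * K * y ^ (((m:ℝ)-1)/2))
            * ENNReal.ofReal (indi (y < u ∧ 0 < u) * (u - y) ^ (-2⁻¹:ℝ)) = 0 := by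
        intro y
        have : indi (y < u ∧ 0 < u) = 0 := indi_neg (by tauto)
        rw [this, zero_mul, ENNReal.ofReal_zero, mul_zero]
      rw [lintegral_congr hz, lintegral_zero]
      rw [indi_neg (show ¬(0 < u) from hu), zero_mul, zero_mul, ENNReal.ofReal_zero]

lemma indi_sq (p : Prop) : indi p ^ 2 = indi p := by
  by_cases h : p
  · rw [indi_pos h]; norm_num
  · rw [indi_neg h]; norm_num

lemma measurableSet_cond (n : ℕ) :
    MeasurableSet {t : Fin n → ℝ | (∀ j, 0 < t j ∧ t j ≤ 1) ∧ StrictMono t} := by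
  have h1 : MeasurableSet {t : Fin n → ℝ | ∀ j, 0 < t j ∧ t j ≤ 1} := by
    rw [show {t : Fin n → ℝ | ∀ j, 0 < t j ∧ t j ≤ 1}
        = ⋂ j, ({t | 0 < t j} ∩ {t | t j ≤ 1}) by ext; simp [forall_and]]
    exact MeasurableSet.iInter fun j =>
      (measurableSet_lt measurable_const (measurable_pi_apply j)).inter
        (measurableSet_le (measurable_pi_apply j) measurable_const)
  exact h1.inter (measurableSet_strictMono n)

lemma measurable_heatK2 : Measurable fun p : ℝ × ℝ => heatK p.1 p.2 := by
  unfold heatK; fun_prop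

lemma rhoN_sq (n : ℕ) (q : (Fin n → ℝ) × (Fin n → ℝ)) :
    rhoN n q ^ 2 = indi ((∀ j, 0 < q.1 j ∧ q.1 j ≤ 1) ∧ StrictMono q.1) *
      ∏ j, heatK (q.1 j - prev q.1 j) (q.2 j - prev q.2 j) ^ 2 := by
  unfold rhoN
  rw [mul_pow, indi_sq, ← Finset.prod_pow]

lemma measurable_rhoN_sq (n : ℕ) :
    Measurable fun q : (Fin n → ℝ) × (Fin n → ℝ) => rhoN n q ^ 2 := by
  have h1 : Measurable fun q : (Fin n → ℝ) × (Fin n → ℝ) =>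
      indi ((∀ j, 0 < q.1 j ∧ q.1 j ≤ 1) ∧ StrictMono q.1) :=
    (measurable_indi (measurableSet_cond n)).comp measurable_fst
  have h2 : Measurable fun q : (Fin n → ℝ) × (Fin n → ℝ) =>
      ∏ j, heatK (q.1 j - prev q.1 j) (q.2 j - prev q.2 j) ^ 2 :=
    Finset.measurable_prod _ fun j _ =>
      (measurable_heatK2.comp
        ((((measurable_pi_apply j).comp measurable_fst).sub
            ((measurable_prev j).comp measurable_fst)).prodMk
          (((measurable_pi_apply j).comp measurable_snd).sub
            ((measurable_prev j).comp measurable_snd)))).pow_const 2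
  have : (fun q : (Fin n → ℝ) × (Fin n → ℝ) => rhoN n q ^ 2)
      = fun q => indi ((∀ j, 0 < q.1 j ∧ q.1 j ≤ 1) ∧ StrictMono q.1) *
          ∏ j, heatK (q.1 j - prev q.1 j) (q.2 j - prev q.2 j) ^ 2 := by
    funext q; exact rhoN_sq n q
  rw [this]
  exact h1.mul h2

end AuxProofs

section MainProof
open MeasureTheory Real Set ENNReal
/-- For every `n ≥ 1`,
`∫_{[0,1]^n} ∫_{ℝ^n} ϱ_n(t,x)² dx dt = 1 / (2^n Γ(n/2 + 1))`. -/
theorem statement6 (n : ℕ) (hn : 1 ≤ n) :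
    ∫ q in ((Set.univ.pi fun _ : Fin n => Set.Icc (0 : ℝ) 1) ×ˢ
        (Set.univ : Set (Fin n → ℝ))), (rhoN n q) ^ 2
      = 1 / (2 ^ n * Real.Gamma ((n : ℝ) / 2 + 1)) := by
  obtain ⟨m, rfl⟩ : ∃ m, n = m + 1 := ⟨n - 1, (Nat.succ_pred_eq_of_pos hn).symm⟩
  set S := ((Set.univ.pi fun _ : Fin (m+1) => Set.Icc (0 : ℝ) 1) ×ˢ
      (Set.univ : Set (Fin (m+1) → ℝ))) with hSdef
  have hS : MeasurableSet S :=
    (MeasurableSet.univ_pi fun _ => measurableSet_Icc).prod MeasurableSet.univ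
  -- Step A : Bochner → lintegral
  have hA : ∫ q in S, (rhoN (m+1) q) ^ 2
      = (∫⁻ q in S, ENNReal.ofReal (rhoN (m+1) q ^ 2)).toReal :=
    integral_eq_lintegral_of_nonneg_ae (Filter.Eventually.of_forall fun q => sq_nonneg _)
      (measurable_rhoN_sq (m+1)).aestronglyMeasurable
  -- Step B : drop the set restriction
  have hB : ∫⁻ q in S, ENNReal.ofReal (rhoN (m+1) q ^ 2)
      = ∫⁻ q, ENNReal.ofReal (rhoN (m+1) q ^ 2) := by
    rw [← lintegral_indicator hS]
    refine lintegral_congr fun q => ?_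
    by_cases hq : q ∈ S
    · rw [Set.indicator_of_mem hq]
    · rw [Set.indicator_of_notMem hq]
      have hcond : ¬((∀ j, 0 < q.1 j ∧ q.1 j ≤ 1) ∧ StrictMono q.1) := by
        intro hc
        refine hq ?_
        rw [hSdef]
        refine Set.mem_prod.mpr ⟨?_, Set.mem_univ _⟩
        exact Set.mem_univ_pi.mpr fun j => ⟨(hc.1 j).1.le, (hc.1 j).2⟩
      have : rhoN (m+1) q = 0 := by
        unfold rhoN
        rw [indi_neg hcond, zero_mul]
      rw [this]
      simp
  -- Step C : inner x-integral
  have hC : ∀ t : Fin (m+1) → ℝ, ∫⁻ x : Fin (m+1) → ℝ,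
      ENNReal.ofReal (indi ((∀ j, 0 < t j ∧ t j ≤ 1) ∧ StrictMono t)
        * ∏ j, heatK (t j - prev t j) (x j - prev x j) ^ 2)
      = ENNReal.ofReal (indi ((∀ j, 0 < t j ∧ t j ≤ 1) ∧ StrictMono t)
        * ∏ j, ((2 * Real.sqrt Real.pi)⁻¹ * (t j - prev t j) ^ (-2⁻¹ : ℝ))) := by
    intro t
    by_cases hc : (∀ j, 0 < t j ∧ t j ≤ 1) ∧ StrictMono t
    · simp only [indi_pos hc, one_mul]
      exact xlem (m+1) (fun j => t j - prev t j)
        (fun j => gaps_pos ⟨fun j => (hc.1 j).1, hc.2⟩ j)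
    · simp only [indi_neg hc, zero_mul, ENNReal.ofReal_zero, lintegral_zero]
  -- pointwise algebraic splits
  have hsplit : ∀ t : Fin (m+1) → ℝ,
      indi ((∀ j, 0 < t j ∧ t j ≤ 1) ∧ StrictMono t)
        * ∏ j, ((2 * Real.sqrt Real.pi)⁻¹ * (t j - prev t j) ^ (-2⁻¹ : ℝ))
      = ((2 * Real.sqrt Real.pi)⁻¹) ^ (m+1)
        * (indi ((∀ j, 0 < t j ∧ t j ≤ 1) ∧ StrictMono t)
          * ∏ j, (t j - prev t j) ^ (-2⁻¹ : ℝ)) := by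
    intro t
    rw [Finset.prod_mul_distrib, Finset.prod_const, Finset.card_univ, Fintype.card_fin]
    ring
  have hGrept : ∀ t : Fin (m+1) → ℝ,
      indi ((∀ j, 0 < t j ∧ t j ≤ 1) ∧ StrictMono t)
        * ∏ j, (t j - prev t j) ^ (-2⁻¹ : ℝ)
      = Gre (m+1) t * indi (t (Fin.last m) ≤ 1) := by
    intro t
    by_cases hg : (∀ j, 0 < t j) ∧ StrictMono t
    · have hiff : ((∀ j, 0 < t j ∧ t j ≤ 1) ∧ StrictMono t)
          ↔ (((∀ j, 0 < t j) ∧ StrictMono t) ∧ t (Fin.last m) ≤ 1) := by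
        constructor
        · intro hc
          exact ⟨⟨fun j => (hc.1 j).1, hc.2⟩, (hc.1 (Fin.last m)).2⟩
        · rintro ⟨⟨h1, h2⟩, h3⟩
          exact ⟨fun j => ⟨h1 j, le_trans (h2.monotone (Fin.le_last j)) h3⟩, h2⟩
      rw [indi_congr hiff, indi_mul]
      unfold Gre
      ring
    · rw [indi_neg (fun hc => hg ⟨fun j => (hc.1 j).1, hc.2⟩)]
      unfold Gre
      rw [indi_neg hg]
      ring
  -- measurability of the t-integrand
  have hMeasInner : Measurable fun t : Fin (m+1) → ℝ =>
      ENNReal.ofReal (Gre (m+1) t * indi (t (Fin.last m) ≤ 1)) :=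
    ENNReal.measurable_ofReal.comp ((measurable_Gre (m+1)).mul
      (measurable_indi (measurableSet_le (measurable_pi_apply _) measurable_const)))
  have hΓa : 0 < Real.Gamma (((m:ℝ)+1)/2) := Real.Gamma_pos_of_pos (by positivity)
  have hKpos : 0 < Real.pi ^ (((m:ℝ)+1)/2) / Real.Gamma (((m:ℝ)+1)/2) :=
    div_pos (Real.rpow_pos_of_pos Real.pi_pos _) hΓa
  -- the t-integral via Tlem
  have hT : ∫⁻ t : Fin (m+1) → ℝ,
      ENNReal.ofReal (Gre (m+1) t * indi (t (Fin.last m) ≤ 1))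
      = ENNReal.ofReal ((Real.pi ^ (((m:ℝ)+1)/2) / Real.Gamma (((m:ℝ)+1)/2))
          * (1 / (((m:ℝ)+1)/2))) := by
    rw [lintegral_snoc_peel _ hMeasInner]
    have hpt : ∀ y : ℝ, ∫⁻ p : Fin m → ℝ,
        ENNReal.ofReal (Gre (m+1) (Fin.snoc p y)
          * indi ((Fin.snoc p y : Fin (m+1) → ℝ) (Fin.last m) ≤ 1))
        = ENNReal.ofReal (indi (0 < y)
            * (Real.pi ^ (((m:ℝ)+1)/2) / Real.Gamma (((m:ℝ)+1)/2)) * y ^ (((m:ℝ)-1)/2))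
          * ENNReal.ofReal (indi (y ≤ 1)) := by
      intro y
      have : ∀ p : Fin m → ℝ,
          ENNReal.ofReal (Gre (m+1) (Fin.snoc p y)
            * indi ((Fin.snoc p y : Fin (m+1) → ℝ) (Fin.last m) ≤ 1))
          = ENNReal.ofReal (Gre (m+1) (Fin.snoc p y)) * ENNReal.ofReal (indi (y ≤ 1)) := by
        intro p
        rw [Fin.snoc_last, ENNReal.ofReal_mul (Gre_nonneg _ _)]
      rw [lintegral_congr this]
      have hAmeas : Measurable fun p : Fin m → ℝ =>
          ENNReal.ofReal (Gre (m+1) (Fin.snoc p y)) :=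
        ENNReal.measurable_ofReal.comp ((measurable_Gre (m+1)).comp (measurable_snoc_right y))
      rw [lintegral_mul_const _ hAmeas, Tlem m y]
    rw [lintegral_congr hpt]
    have hind : ∀ y : ℝ,
        ENNReal.ofReal (indi (0 < y)
            * (Real.pi ^ (((m:ℝ)+1)/2) / Real.Gamma (((m:ℝ)+1)/2)) * y ^ (((m:ℝ)-1)/2))
          * ENNReal.ofReal (indi (y ≤ 1))
        = (Set.Ioc (0:ℝ) 1).indicator (fun y => ENNReal.ofReal
            ((Real.pi ^ (((m:ℝ)+1)/2) / Real.Gamma (((m:ℝ)+1)/2)) * y ^ (((m:ℝ)-1)/2))) y := by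
      intro y
      by_cases hy : y ∈ Set.Ioc (0:ℝ) 1
      · rw [Set.indicator_of_mem hy, indi_pos hy.1, indi_pos hy.2, one_mul,
          ENNReal.ofReal_one, mul_one]
      · rw [Set.indicator_of_notMem hy]
        simp only [Set.mem_Ioc, not_and_or, not_lt, not_le] at hy
        rcases hy with hy0 | hy1
        · rw [indi_neg (show ¬(0 < y) from not_lt.mpr hy0), zero_mul, zero_mul,
            ENNReal.ofReal_zero, zero_mul]
        · rw [indi_neg (show ¬(y ≤ 1) from not_le.mpr hy1), ENNReal.ofReal_zero, mul_zero]
    rw [lintegral_congr hind, lintegral_indicator measurableSet_Ioc]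
    have hrexp : (-1:ℝ) < ((m:ℝ)-1)/2 := by
      have : (0:ℝ) ≤ (m:ℝ) := Nat.cast_nonneg m
      linarith
    have hIntOn : IntegrableOn (fun y : ℝ =>
        (Real.pi ^ (((m:ℝ)+1)/2) / Real.Gamma (((m:ℝ)+1)/2)) * y ^ (((m:ℝ)-1)/2))
        (Set.Ioc (0:ℝ) 1) := by
      have h0 : IntegrableOn (fun y : ℝ => y ^ (((m:ℝ)-1)/2)) (Set.Ioc (0:ℝ) 1) :=
        (intervalIntegrable_iff_integrableOn_Ioc_of_le zero_le_one).mp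
          (intervalIntegral.intervalIntegrable_rpow' hrexp)
      exact h0.const_mul _
    have hnn : (0 : ℝ → ℝ) ≤ᶠ[MeasureTheory.ae (volume.restrict (Set.Ioc (0:ℝ) 1))]
        fun y : ℝ => (Real.pi ^ (((m:ℝ)+1)/2) / Real.Gamma (((m:ℝ)+1)/2)) * y ^ (((m:ℝ)-1)/2) := by
      have := (ae_restrict_iff' (μ := volume) measurableSet_Ioc
          (p := fun y : ℝ => 0 ≤ (Real.pi ^ (((m:ℝ)+1)/2) / Real.Gamma (((m:ℝ)+1)/2))
            * y ^ (((m:ℝ)-1)/2))).mpr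
        (Filter.Eventually.of_forall fun y (hy : y ∈ Set.Ioc (0:ℝ) 1) =>
          mul_nonneg hKpos.le (Real.rpow_nonneg hy.1.le _))
      exact this
    rw [← ofReal_integral_eq_lintegral_ofReal hIntOn hnn]
    congr 1
    rw [MeasureTheory.integral_const_mul, ← intervalIntegral.integral_of_le zero_le_one,
      integral_rpow (Or.inl hrexp)]
    rw [Real.one_rpow, Real.zero_rpow (by linarith : ((m:ℝ)-1)/2 + 1 ≠ 0)]
    rw [show ((m:ℝ)-1)/2 + 1 = ((m:ℝ)+1)/2 by ring]
    norm_num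
  -- assemble
  have hmain : ∫⁻ q, ENNReal.ofReal (rhoN (m+1) q ^ 2)
      = ENNReal.ofReal ((((2 * Real.sqrt Real.pi)⁻¹) ^ (m+1))
          * ((Real.pi ^ (((m:ℝ)+1)/2) / Real.Gamma (((m:ℝ)+1)/2)) * (1 / (((m:ℝ)+1)/2)))) := by
    have hmeas : Measurable fun q : (Fin (m+1) → ℝ) × (Fin (m+1) → ℝ) =>
        ENNReal.ofReal (rhoN (m+1) q ^ 2) :=
      ENNReal.measurable_ofReal.comp (measurable_rhoN_sq (m+1))
    rw [Measure.volume_eq_prod, lintegral_prod _ hmeas.aemeasurable]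
    calc ∫⁻ t : Fin (m+1) → ℝ, ∫⁻ x : Fin (m+1) → ℝ,
          ENNReal.ofReal (rhoN (m+1) (t, x) ^ 2)
        = ∫⁻ t : Fin (m+1) → ℝ,
            ENNReal.ofReal (indi ((∀ j, 0 < t j ∧ t j ≤ 1) ∧ StrictMono t)
              * ∏ j, ((2 * Real.sqrt Real.pi)⁻¹ * (t j - prev t j) ^ (-2⁻¹ : ℝ))) := by
          refine lintegral_congr fun t => ?_
          rw [← hC t]
          exact lintegral_congr fun x => by rw [rhoN_sq (m+1) (t, x)]
      _ = ∫⁻ t : Fin (m+1) → ℝ,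
            ENNReal.ofReal ((((2 * Real.sqrt Real.pi)⁻¹) ^ (m+1) : ℝ))
              * ENNReal.ofReal (Gre (m+1) t * indi (t (Fin.last m) ≤ 1)) := by
          refine lintegral_congr fun t => ?_
          rw [← ENNReal.ofReal_mul (by positivity), ← hGrept t, ← hsplit t]
      _ = ENNReal.ofReal ((((2 * Real.sqrt Real.pi)⁻¹) ^ (m+1) : ℝ))
            * ∫⁻ t : Fin (m+1) → ℝ,
              ENNReal.ofReal (Gre (m+1) t * indi (t (Fin.last m) ≤ 1)) := by
          rw [lintegral_const_mul _ hMeasInner]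
      _ = _ := by
          rw [hT, ← ENNReal.ofReal_mul (by positivity)]
  -- final numerics
  rw [hA, hB, hmain, ENNReal.toReal_ofReal (by positivity)]
  have hπn : Real.sqrt Real.pi ^ (m+1) = Real.pi ^ (((m:ℝ)+1)/2) := by
    rw [Real.sqrt_eq_rpow, ← Real.rpow_natCast (Real.pi ^ ((1:ℝ)/2)) (m+1),
      ← Real.rpow_mul Real.pi_pos.le]
    congr 1
    push_cast
    ring
  have hΓsucc : Real.Gamma (((m+1:ℕ):ℝ)/2 + 1) = (((m:ℝ)+1)/2) * Real.Gamma (((m:ℝ)+1)/2) := by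
    push_cast
    exact Real.Gamma_add_one (by positivity)
  rw [hΓsucc]
  have h1 : ((2 * Real.sqrt Real.pi)⁻¹) ^ (m+1)
      = (2 ^ (m+1) * Real.pi ^ (((m:ℝ)+1)/2))⁻¹ := by
    rw [inv_pow, mul_pow, hπn]
  rw [h1]
  have hππ : (0:ℝ) < Real.pi ^ (((m:ℝ)+1)/2) := Real.rpow_pos_of_pos Real.pi_pos _
  have h2 : (0:ℝ) < 2 ^ (m+1) := by positivity
  have hm1 : (0:ℝ) < (m:ℝ) + 1 := by positivity
  field_simp

end MainProof
end

section
/- Let (U_n) and (V_n) be sequences of positive random variables with 0 ≤ U_n ≤ V_n for all n, and suppose (V_n) is uniformly integrable. If V_n / U_n converges in distribution to 1 and lim_{n→∞} E[V_n] = C, then lim_{n→∞} E[U_n] = C. -/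
open MeasureTheory ProbabilityTheory Filter Topology

/-- If `0 ≤ U_n ≤ V_n`, `(V_n)` is uniformly integrable,
`V_n / U_n → 1` in distribution and `E[V_n] → C`, then `E[U_n] → C`. -/
theorem statement13
    {Ω : Type*} [MeasurableSpace Ω] (P : Measure Ω) [IsProbabilityMeasure P]
    (U V : ℕ → Ω → ℝ) (hUmeas : ∀ n, Measurable (U n)) (hVmeas : ∀ n, Measurable (V n))
    (hUpos : ∀ n a, 0 ≤ U n a) (hle : ∀ n a, U n a ≤ V n a)
    (hUI : UniformIntegrable V 1 P)
    (hratio : ∀ f : BoundedContinuousFunction ℝ ℝ,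
      Tendsto (fun n : ℕ => ∫ a, f (V n a / U n a) ∂P) atTop (𝓝 (f 1)))
    (C : ℝ) (hEV : Tendsto (fun n : ℕ => ∫ a, V n a ∂P) atTop (𝓝 C)) :
    Tendsto (fun n : ℕ => ∫ a, U n a ∂P) atTop (𝓝 C) := by
  classical
  have hVpos : ∀ n a, 0 ≤ V n a := fun n a => (hUpos n a).trans (hle n a)
  obtain ⟨hVae, C0, hC0⟩ := hUI.2
  have hVint : ∀ n, Integrable (V n) P := fun n =>
    memLp_one_iff_integrable.mp ⟨(hVmeas n).aestronglyMeasurable,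
      lt_of_le_of_lt (hC0 n) ENNReal.coe_lt_top⟩
  have hUint : ∀ n, Integrable (U n) P :=
    fun n => (hVint n).mono (hUmeas n).aestronglyMeasurable
      (ae_of_all _ fun a => by
        rw [Real.norm_eq_abs, Real.norm_eq_abs, abs_of_nonneg (hUpos n a),
          abs_of_nonneg (hVpos n a)]
        exact hle n a)
  have hVEnn : ∀ n, 0 ≤ ∫ a, V n a ∂P := fun n =>
    integral_nonneg (hVpos n)
  -- measurable bad sets
  have hbadmeas : ∀ (ε : ℝ) (n : ℕ), MeasurableSet {a | ε ≤ |V n a / U n a - 1|} :=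
    fun ε n => measurableSet_le measurable_const
      ((((hVmeas n).div (hUmeas n)).sub measurable_const).abs)
  -- convergence in probability of V/U to 1
  have hprob : ∀ ε : ℝ, 0 < ε →
      Tendsto (fun n => (P {a | ε ≤ |V n a / U n a - 1|}).toReal) atTop (𝓝 0) := by
    intro ε hε
    set φ : ℝ → ℝ := fun x => max (1 - |x - 1| / ε) 0 with hφ
    have hφcont : Continuous φ := by
      apply Continuous.max _ continuous_const
      fun_prop
    have hφ0 : ∀ x, 0 ≤ φ x := fun x => le_max_right _ _
    have hφ1 : ∀ x, φ x ≤ 1 := by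
      intro x
      apply max_le _ zero_le_one
      have : 0 ≤ |x - 1| / ε := div_nonneg (abs_nonneg _) hε.le
      linarith
    have hφbd : ∀ x, ‖φ x‖ ≤ 1 := fun x => by
      rw [Real.norm_eq_abs, abs_of_nonneg (hφ0 x)]; exact hφ1 x
    set f : BoundedContinuousFunction ℝ ℝ :=
      BoundedContinuousFunction.ofNormedAddCommGroup φ hφcont 1 hφbd with hf
    have hfval : ∀ x, f x = φ x := fun x => rfl
    have h1 : f 1 = 1 := by simp [hfval, hφ]
    have hlim := hratio f
    rw [h1] at hlim
    have hφint : ∀ n, Integrable (fun a => f (V n a / U n a)) P := by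
      intro n
      refine Integrable.mono' (integrable_const 1)
        (hφcont.measurable.comp ((hVmeas n).div (hUmeas n))).aestronglyMeasurable
        (ae_of_all _ fun a => hφbd _)
    have key : ∀ n, (P {a | ε ≤ |V n a / U n a - 1|}).toReal
        ≤ 1 - ∫ a, f (V n a / U n a) ∂P := by
      intro n
      have h1int : ∫ a, {a | ε ≤ |V n a / U n a - 1|}.indicator (fun _ => (1:ℝ)) a ∂P
          = (P {a | ε ≤ |V n a / U n a - 1|}).toReal := by
        rw [integral_indicator_const (1:ℝ) (hbadmeas ε n)]; simp [Measure.real]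
      rw [← h1int]
      have : (1:ℝ) - ∫ a, f (V n a / U n a) ∂P
          = ∫ a, (1 - f (V n a / U n a)) ∂P := by
        rw [integral_sub (integrable_const 1) (hφint n)]
        simp
      rw [this]
      refine integral_mono ((integrable_const 1).indicator (hbadmeas ε n))
        ((integrable_const 1).sub (hφint n)) fun a => ?_
      by_cases ha : a ∈ {a | ε ≤ |V n a / U n a - 1|}
      · rw [Set.indicator_of_mem ha]
        have : φ (V n a / U n a) = 0 := by
          have hε' : ε ≤ |V n a / U n a - 1| := ha
          apply max_eq_right
          have : 1 ≤ |V n a / U n a - 1| / ε := (one_le_div hε).mpr hε'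
          linarith
        rw [hfval, this]; norm_num
      · rw [Set.indicator_of_notMem ha]
        have := hφ1 (V n a / U n a)
        rw [hfval]; linarith
    apply squeeze_zero (fun n => ENNReal.toReal_nonneg) key
    have : Tendsto (fun n => 1 - ∫ a, f (V n a / U n a) ∂P) atTop (𝓝 (1 - 1)) :=
      tendsto_const_nhds.sub hlim
    simpa using this
  -- main estimate
  have hdiff : Tendsto (fun n => (∫ a, V n a ∂P) - ∫ a, U n a ∂P) atTop (𝓝 0) := by
    rw [Metric.tendsto_atTop]
    intro ε' hε'
    have hB : ∀ᶠ n in atTop, ∫ a, V n a ∂P ≤ |C| + 1 := by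
      obtain ⟨N, hN⟩ := Metric.tendsto_atTop.mp hEV 1 one_pos
      rw [eventually_atTop]
      refine ⟨N, fun n hnN => ?_⟩
      have hn := hN n hnN
      have := abs_sub_abs_le_abs_sub (∫ a, V n a ∂P) C
      rw [Real.dist_eq] at hn
      have h2 : ∫ a, V n a ∂P ≤ |∫ a, V n a ∂P| := le_abs_self _
      linarith
    set B : ℝ := |C| + 1 with hBdef
    have hBpos : 0 < B := by positivity
    set δ : ℝ := ε' / 4 with hδ
    have hδpos : 0 < δ := by positivity
    obtain ⟨M, hM⟩ := ((uniformIntegrable_iff le_rfl ENNReal.one_ne_top).mp hUI).2 δ hδpos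
    set ε : ℝ := min (1/2) (ε' / (4 * B)) with hεdef
    have hεpos : 0 < ε := lt_min (by norm_num) (by positivity)
    have hεhalf : ε ≤ 1/2 := min_le_left _ _
    have hbig : ∀ n, ∫ a, ({x | M ≤ ‖V n x‖₊}.indicator (V n)) a ∂P ≤ δ := by
      intro n
      have hme : MeasurableSet {x | M ≤ ‖V n x‖₊} := by
        apply measurableSet_le measurable_const
        exact (hVmeas n).nnnorm
      have hint : Integrable ({x | M ≤ ‖V n x‖₊}.indicator (V n)) P :=
        (hVint n).indicator hme
      calc ∫ a, ({x | M ≤ ‖V n x‖₊}.indicator (V n)) a ∂P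
          ≤ ∫ a, ‖({x | M ≤ ‖V n x‖₊}.indicator (V n)) a‖ ∂P :=
            integral_mono hint hint.norm fun a => le_abs_self _
        _ = (∫⁻ a, ‖({x | M ≤ ‖V n x‖₊}.indicator (V n)) a‖₊ ∂P).toReal :=
            integral_norm_eq_lintegral_enorm hint.aestronglyMeasurable
        _ = (eLpNorm ({x | M ≤ ‖V n x‖₊}.indicator (V n)) 1 P).toReal := by
            exact (congrArg ENNReal.toReal (eLpNorm_one_eq_lintegral_enorm (f := {x | M ≤ ‖V n x‖₊}.indicator (V n)) (μ := P))).symm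
        _ ≤ (ENNReal.ofReal δ).toReal := ENNReal.toReal_mono ENNReal.ofReal_ne_top (hM n)
        _ = δ := ENNReal.toReal_ofReal hδpos.le
    have hmain : ∀ n, (∫ a, V n a ∂P) - ∫ a, U n a ∂P
        ≤ ε * ∫ a, V n a ∂P + ((M:ℝ) * (P {a | ε ≤ |V n a / U n a - 1|}).toReal + δ) := by
      intro n
      set bad := {a | ε ≤ |V n a / U n a - 1|} with hbad
      set big := {x | M ≤ ‖V n x‖₊} with hbigdef
      have hbigme : MeasurableSet big := measurableSet_le measurable_const (hVmeas n).nnnorm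
      have step1 : (∫ a, V n a ∂P) - ∫ a, U n a ∂P
          ≤ ε * ∫ a, V n a ∂P + ∫ a, bad.indicator (V n) a ∂P := by
        rw [← integral_sub (hVint n) (hUint n), ← integral_const_mul, ← integral_add
          ((hVint n).const_mul ε) ((hVint n).indicator (hbadmeas ε n))]
        refine integral_mono ((hVint n).sub (hUint n))
          (((hVint n).const_mul ε).add ((hVint n).indicator (hbadmeas ε n))) fun a => ?_
        dsimp only
        by_cases ha : a ∈ bad
        · rw [Set.indicator_of_mem ha]
          have h1 : 0 ≤ ε * V n a := mul_nonneg hεpos.le (hVpos n a)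
          have := hUpos n a
          linarith
        · rw [Set.indicator_of_notMem ha]
          have hlt : |V n a / U n a - 1| < ε := lt_of_not_ge ha
          have hU0 : U n a ≠ 0 := by
            intro h0
            rw [h0, div_zero] at hlt
            rw [abs_of_nonpos (by norm_num)] at hlt
            have : ε ≤ 1/2 := hεhalf
            linarith
          have hUa : 0 < U n a := lt_of_le_of_ne (hUpos n a) (Ne.symm hU0)
          have h1 : V n a / U n a - 1 < ε := lt_of_abs_lt hlt
          have h2 : V n a < (1 + ε) * U n a := by
            have h1' : V n a / U n a < 1 + ε := by linarith
            rw [div_lt_iff₀ hUa] at h1'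
            linarith
          have h3 : ε * U n a ≤ ε * V n a := mul_le_mul_of_nonneg_left (hle n a) hεpos.le
          linarith
      have step2 : ∫ a, bad.indicator (V n) a ∂P
          ≤ (M:ℝ) * (P bad).toReal + ∫ a, big.indicator (V n) a ∂P := by
        have hintM : Integrable (bad.indicator fun _ => (M:ℝ)) P :=
          (integrable_const _).indicator (hbadmeas ε n)
        have hintbig : Integrable (big.indicator (V n)) P := (hVint n).indicator hbigme
        have hmono : ∀ a, bad.indicator (V n) a
            ≤ bad.indicator (fun _ => (M:ℝ)) a + big.indicator (V n) a := by
          intro a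
          have hbignn : 0 ≤ big.indicator (V n) a := by
            apply Set.indicator_nonneg (fun x _ => hVpos n x)
          by_cases ha : a ∈ bad
          · rw [Set.indicator_of_mem ha, Set.indicator_of_mem ha]
            by_cases hb : a ∈ big
            · rw [Set.indicator_of_mem hb]
              have : (0:ℝ) ≤ M := M.coe_nonneg
              linarith
            · rw [Set.indicator_of_notMem hb]
              have : ¬(M ≤ ‖V n a‖₊) := hb
              rw [not_le] at this
              have h2 : ‖V n a‖ < (M:ℝ) := this
              rw [Real.norm_eq_abs, abs_of_nonneg (hVpos n a)] at h2
              linarith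
          · rw [Set.indicator_of_notMem ha, Set.indicator_of_notMem ha]
            linarith
        calc ∫ a, bad.indicator (V n) a ∂P
            ≤ ∫ a, (bad.indicator (fun _ => (M:ℝ)) a + big.indicator (V n) a) ∂P :=
              integral_mono ((hVint n).indicator (hbadmeas ε n)) (hintM.add hintbig) hmono
          _ = (∫ a, bad.indicator (fun _ => (M:ℝ)) a ∂P) + ∫ a, big.indicator (V n) a ∂P :=
              integral_add hintM hintbig
          _ = (M:ℝ) * (P bad).toReal + ∫ a, big.indicator (V n) a ∂P := by
              rw [integral_indicator_const ((M:ℝ)) (hbadmeas ε n), smul_eq_mul, mul_comm]; rfl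
      have := hbig n
      linarith [step1, step2]
    -- conclude
    have hP := Metric.tendsto_atTop.mp (hprob ε hεpos)
    have hMP : ∀ᶠ n in atTop, (M:ℝ) * (P {a | ε ≤ |V n a / U n a - 1|}).toReal ≤ ε'/4 := by
      obtain ⟨N, hN⟩ := hP (ε'/(4*((M:ℝ)+1))) (by positivity)
      rw [eventually_atTop]
      refine ⟨N, fun n hn => ?_⟩
      have := hN n hn
      rw [Real.dist_eq, sub_zero, abs_of_nonneg ENNReal.toReal_nonneg] at this
      have hM1 : (M:ℝ) ≤ (M:ℝ) + 1 := by linarith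
      have h0 : (0:ℝ) ≤ (M:ℝ) := M.coe_nonneg
      calc (M:ℝ) * (P {a | ε ≤ |V n a / U n a - 1|}).toReal
          ≤ ((M:ℝ)+1) * (ε'/(4*((M:ℝ)+1))) := by
            apply mul_le_mul hM1 this.le ENNReal.toReal_nonneg (by linarith)
        _ = ε'/4 := by field_simp
    rw [← eventually_atTop]
    filter_upwards [hB, hMP] with n hBn hMPn
    rw [Real.dist_eq, sub_zero]
    have hnn : 0 ≤ (∫ a, V n a ∂P) - ∫ a, U n a ∂P := by
      have := integral_mono (hUint n) (hVint n) (hle n)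
      linarith
    rw [abs_of_nonneg hnn]
    have h1 : ε * ∫ a, V n a ∂P ≤ ε'/4 := by
      have hεle : ε ≤ ε' / (4 * B) := min_le_right _ _
      calc ε * ∫ a, V n a ∂P ≤ ε * B := mul_le_mul_of_nonneg_left hBn hεpos.le
        _ ≤ (ε' / (4 * B)) * B := mul_le_mul_of_nonneg_right hεle hBpos.le
        _ = ε'/4 := by field_simp
    have := hmain n
    have hδ4 : δ = ε'/4 := rfl
    linarith
  have : Tendsto (fun n => (∫ a, V n a ∂P) - ((∫ a, V n a ∂P) - ∫ a, U n a ∂P))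
      atTop (𝓝 (C - 0)) := hEV.sub hdiff
  simpa using this
end
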